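/- arXiv:1505.06216 — 11 statements merged into one kernel-verified Lean document; each statement's English description precedes it below -/
import Mathlib

section
/- Let R, R̄ > 0 and let P be a probability distribution on Y = {R, −R̄} with P(y) > 0 for both outcomes, and let f be a real betting fraction with 1 + f·y > 0 for both y ∈ Y. Then Σ_{y∈Y} P(y)·ln(1 + f·y) ≤ D_KL(P‖Q), where D_KL(P‖Q) = Σ_{y∈Y} P(y)·ln(P(y)/Q(y)). -/
/-- Outcome value map for binary gambling: `true ↦ R` (win), `false ↦ -R̄` (loss). -/
noncomputable def val (R Rbar : ℝ) (b : Bool) : ℝ := if b then R else -Rbar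

/-- The reference distribution `Q` on the two outcomes:
`Q(R) = R̄/(R+R̄)`, `Q(-R̄) = R/(R+R̄)`. -/
noncomputable def Qb (R Rbar : ℝ) (b : Bool) : ℝ :=
  if b then Rbar / (R + Rbar) else R / (R + Rbar)

/-- The average capital growth rate in simple binary gambling is bounded by
the Kullback–Leibler divergence `D_KL(P‖Q)`. -/
theorem stmt1 (R Rbar : ℝ) (hR : 0 < R) (hRbar : 0 < Rbar)
    (P : Bool → ℝ) (hP : ∀ b, 0 < P b) (hPsum : ∑ b, P b = 1)
    (f : ℝ) (hf : ∀ b, 0 < 1 + f * val R Rbar b) :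
    ∑ b, P b * Real.log (1 + f * val R Rbar b)
      ≤ ∑ b, P b * Real.log (P b / Qb R Rbar b) := by
  have hQpos : ∀ b, 0 < Qb R Rbar b := by
    intro b; cases b <;> simp only [Qb, if_true, if_false] <;> positivity
  have key : ∀ b, P b * Real.log (1 + f * val R Rbar b)
      ≤ P b * Real.log (P b / Qb R Rbar b)
        + ((1 + f * val R Rbar b) * Qb R Rbar b - P b) := by
    intro b
    have h1 := hf b
    have hp := hP b
    have hq := hQpos b
    have hx : 0 < (1 + f * val R Rbar b) * Qb R Rbar b / P b := by positivity
    have hlog := Real.log_le_sub_one_of_pos hx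
    have hls : Real.log ((1 + f * val R Rbar b) * Qb R Rbar b / P b)
        = Real.log (1 + f * val R Rbar b) - Real.log (P b / Qb R Rbar b) := by
      rw [Real.log_div (by positivity) (ne_of_gt hp),
        Real.log_mul (ne_of_gt h1) (ne_of_gt hq),
        Real.log_div (ne_of_gt hp) (ne_of_gt hq)]
      ring
    rw [hls] at hlog
    have h2 := mul_le_mul_of_nonneg_left hlog hp.le
    have hrw : P b * ((1 + f * val R Rbar b) * Qb R Rbar b / P b - 1)
        = (1 + f * val R Rbar b) * Qb R Rbar b - P b := by
      field_simp
    nlinarith [h2]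
  have hsum : ∑ b, P b * Real.log (1 + f * val R Rbar b)
      ≤ ∑ b, (P b * Real.log (P b / Qb R Rbar b)
        + ((1 + f * val R Rbar b) * Qb R Rbar b - P b)) :=
    Finset.sum_le_sum fun b _ => key b
  have hQsum : ∑ b, ((1 + f * val R Rbar b) * Qb R Rbar b - P b) = 0 := by
    have h := hPsum
    simp only [Fintype.sum_bool, val, Qb, if_true, Bool.false_eq_true, if_false] at h ⊢
    have hne : R + Rbar ≠ 0 := by positivity
    field_simp
    nlinarith [h]
  calc ∑ b, P b * Real.log (1 + f * val R Rbar b)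
      ≤ ∑ b, (P b * Real.log (P b / Qb R Rbar b)
        + ((1 + f * val R Rbar b) * Qb R Rbar b - P b)) := hsum
    _ = ∑ b, P b * Real.log (P b / Qb R Rbar b)
        + ∑ b, ((1 + f * val R Rbar b) * Qb R Rbar b - P b) := Finset.sum_add_distrib
    _ = ∑ b, P b * Real.log (P b / Qb R Rbar b) := by rw [hQsum, add_zero]
end

section
/- Let P be a probability distribution on Y = {1, −1} with P(y) > 0 for both outcomes, and let f ∈ (−1, 1) be a betting fraction. Then Σ_{y∈Y} P(y)·ln(1 + f·y) ≤ ln 2 − S(Y), where S(Y) = −Σ_{y∈Y} P(y)·ln P(y) is the Shannon entropy of the outcome. -/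
/-- In even-money binary gambling (`y ∈ {1, -1}`), the average capital growth rate
is bounded by `ln 2 - S(Y)`, where `S(Y)` is the Shannon entropy of the outcome. -/
theorem stmt2 (P : Bool → ℝ) (hP : ∀ b, 0 < P b) (hPsum : ∑ b, P b = 1)
    (f : ℝ) (hf : f ∈ Set.Ioo (-1 : ℝ) 1) :
    ∑ b, P b * Real.log (1 + f * (if b then (1 : ℝ) else -1))
      ≤ Real.log 2 - (-∑ b, P b * Real.log (P b)) := by
  obtain ⟨hf1, hf2⟩ := hf
  have hp := hP true
  have hq := hP false
  have hsum : P true + P false = 1 := by simpa [Fin.sum_univ_succ] using hPsum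
  set p := P true
  set q := P false
  have hfp : (0:ℝ) < 1 + f := by linarith
  have hfm : (0:ℝ) < 1 - f := by linarith
  have key : ∀ (r x : ℝ), 0 < r → 0 < x →
      r * Real.log x ≤ r * Real.log 2 + r * Real.log r + x / 2 - r := by
    intro r x hr hx
    have h1 : Real.log (x / (2 * r)) ≤ x / (2 * r) - 1 :=
      Real.log_le_sub_one_of_pos (by positivity)
    have h2 : Real.log (x / (2 * r)) = Real.log x - (Real.log 2 + Real.log r) := by
      rw [Real.log_div (ne_of_gt hx) (by positivity), Real.log_mul (by norm_num) hr.ne']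
    rw [h2] at h1
    have h3 := mul_le_mul_of_nonneg_left h1 hr.le
    have h4 : r * (x / (2 * r) - 1) = x / 2 - r := by
      field_simp
    rw [h4] at h3
    nlinarith [h3]
  have k1 := key p (1 + f) hp hfp
  have k2 := key q (1 - f) hq hfm
  simp only [Fintype.sum_bool]
  norm_num
  rw [show (1:ℝ) + -f = 1 - f by ring]
  have hl : p * Real.log 2 + q * Real.log 2 = Real.log 2 := by
    rw [← add_mul, hsum, one_mul]
  linarith
end

section
/- Let R, R̄ > 0, let X be a finite set of side-information signals, and let P(x, y) be a joint probability distribution on X × Y with Y = {R, −R̄}, such that all marginals P(x), P(y) and all values P(x, y) are strictly positive. Let f : X → ℝ be a betting strategy with 1 + f(x)·y > 0 for all x ∈ X, y ∈ Y. Then the expectation over (x, y) ∼ P of exp[ln(1 + f(x)·y) − ln P(y) − i_{xy} + ln Q(y)] equals 1, where i_{xy} = ln(P(x, y)/(P(x)·P(y))). -/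
/-- Generalized Jarzynski-type equality for binary gambling with side information:
`⟨exp[g(f_x) + s_y - i_{xy} - s^Q_y]⟩_{x,y} = 1`, where `i_{xy}` is the pointwise
mutual information `ln(P(x,y)/(P(x)P(y)))`. -/
theorem stmt5 {X : Type*} [Fintype X]
    (R Rbar : ℝ) (hR : 0 < R) (hRbar : 0 < Rbar)
    (P : X → Bool → ℝ) (hP : ∀ x b, 0 < P x b) (hPsum : ∑ x, ∑ b, P x b = 1)
    (f : X → ℝ) (hf : ∀ x b, 0 < 1 + f x * val R Rbar b) :
    ∑ x, ∑ b, P x b * Real.exp (Real.log (1 + f x * val R Rbar b)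
        - Real.log (∑ x', P x' b)
        - Real.log (P x b / ((∑ b', P x b') * (∑ x', P x' b)))
        + Real.log (Qb R Rbar b)) = 1 := by
  have hRR : 0 < R + Rbar := by linarith
  have hQ : ∀ b, 0 < Qb R Rbar b := by
    intro b; cases b <;> simp [Qb] <;> positivity
  have hPx : ∀ x, 0 < ∑ b', P x b' := fun x =>
    Finset.sum_pos (fun b _ => hP x b) (by simp)
  have : Nonempty X := by
    by_contra h
    rw [not_nonempty_iff] at h
    simp at hPsum
  have hPy : ∀ b, 0 < ∑ x', P x' b := fun b =>
    Finset.sum_pos (fun x _ => hP x b) Finset.univ_nonempty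
  -- rewrite each term
  have key : ∀ x b, P x b * Real.exp (Real.log (1 + f x * val R Rbar b)
        - Real.log (∑ x', P x' b)
        - Real.log (P x b / ((∑ b', P x b') * (∑ x', P x' b)))
        + Real.log (Qb R Rbar b))
      = (∑ b', P x b') * ((1 + f x * val R Rbar b) * Qb R Rbar b) := by
    intro x b
    rw [Real.exp_add, Real.exp_sub, Real.exp_sub,
      Real.exp_log (hf x b), Real.exp_log (hPy b), Real.exp_log (hQ b),
      Real.exp_log (div_pos (hP x b) (mul_pos (hPx x) (hPy b)) : (0:ℝ) < P x b / ((∑ b', P x b') * (∑ x', P x' b)))]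
    have h1 : P x b ≠ 0 := (hP x b).ne'
    have h2 : (∑ b', P x b') ≠ 0 := (hPx x).ne'
    have h3 : (∑ x', P x' b) ≠ 0 := (hPy b).ne'
    field_simp
  simp only [key]
  have hsum : ∀ x, ∑ b, ((1 + f x * val R Rbar b) * Qb R Rbar b) = 1 := by
    intro x
    simp [Fintype.sum_bool, Qb, val]
    field_simp
    ring
  simp only [← Finset.mul_sum, hsum, mul_one]
  calc ∑ x, ∑ b', P x b' = ∑ x, ∑ b, P x b := rfl
    _ = 1 := hPsum
end

section
/- Let R, R̄ > 0, let X be a finite set, and let P(x, y) be a joint probability distribution on X × {R, −R̄} with all values and marginals strictly positive. Let f : X → ℝ satisfy 1 + f(x)·y > 0 for all x, y. Then Σ_{x,y} P(x,y)·ln(1 + f(x)·y) ≤ D_KL(P(y)‖Q(y)) + I(X:Y), where D_KL(P(y)‖Q(y)) = Σ_y P(y) ln(P(y)/Q(y)) and I(X:Y) = Σ_{x,y} P(x,y) ln(P(x,y)/(P(x)P(y))) is the mutual information. -/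
/-- In binary gambling with side information, the average capital growth rate is
bounded by `D_KL(P(y)‖Q(y)) + I(X:Y)`. -/
theorem stmt6 {X : Type*} [Fintype X]
    (R Rbar : ℝ) (hR : 0 < R) (hRbar : 0 < Rbar)
    (P : X → Bool → ℝ) (hP : ∀ x b, 0 < P x b) (hPsum : ∑ x, ∑ b, P x b = 1)
    (f : X → ℝ) (hf : ∀ x b, 0 < 1 + f x * val R Rbar b) :
    ∑ x, ∑ b, P x b * Real.log (1 + f x * val R Rbar b)
      ≤ (∑ b, (∑ x, P x b) * Real.log ((∑ x, P x b) / Qb R Rbar b))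
        + ∑ x, ∑ b, P x b * Real.log (P x b / ((∑ b', P x b') * (∑ x', P x' b))) := by
  classical
  have hRR : 0 < R + Rbar := by linarith
  set Px : X → ℝ := fun x => ∑ b', P x b' with hPxdef
  set Pb : Bool → ℝ := fun b => ∑ x', P x' b with hPbdef
  have hne : (Finset.univ : Finset X).Nonempty := by
    by_contra h
    rw [Finset.not_nonempty_iff_eq_empty] at h
    rw [h] at hPsum
    simp at hPsum
  have hPxpos : ∀ x, 0 < Px x := fun x =>
    Finset.sum_pos (fun b _ => hP x b) (by simp)
  have hPbpos : ∀ b, 0 < Pb b := fun b =>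
    Finset.sum_pos (fun x _ => hP x b) hne
  have hQpos : ∀ b, 0 < Qb R Rbar b := by
    intro b; cases b <;> simp [Qb] <;> positivity
  have hQsum : ∀ x, ∑ b, Qb R Rbar b * (1 + f x * val R Rbar b) = 1 := by
    intro x
    simp only [Fintype.sum_bool, Qb, val, if_true, if_false, Bool.false_eq_true]
    field_simp
    ring
  have key : ∀ x b, P x b * Real.log (1 + f x * val R Rbar b)
      ≤ P x b * Real.log (Pb b / Qb R Rbar b)
        + P x b * Real.log (P x b / (Px x * Pb b))
        + ((1 + f x * val R Rbar b) * Px x * Qb R Rbar b - P x b) := by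
    intro x b
    have h1 := hf x b
    have hq := hQpos b
    have hpxb := hP x b
    have hpx := hPxpos x
    have hpb := hPbpos b
    have ht : 0 < (1 + f x * val R Rbar b) * Px x * Qb R Rbar b / P x b := by positivity
    have hlog := Real.log_le_sub_one_of_pos ht
    have hexpand : Real.log ((1 + f x * val R Rbar b) * Px x * Qb R Rbar b / P x b)
        = Real.log (1 + f x * val R Rbar b) - Real.log (Pb b / Qb R Rbar b)
          - Real.log (P x b / (Px x * Pb b)) := by
      rw [Real.log_div (by positivity) hpxb.ne', Real.log_mul (by positivity) hq.ne',
          Real.log_mul h1.ne' hpx.ne', Real.log_div hpb.ne' hq.ne',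
          Real.log_div hpxb.ne' (by positivity), Real.log_mul hpx.ne' hpb.ne']
      ring
    rw [hexpand] at hlog
    have h2 := mul_le_mul_of_nonneg_left hlog hpxb.le
    have h3 : P x b * ((1 + f x * val R Rbar b) * Px x * Qb R Rbar b / P x b - 1)
        = (1 + f x * val R Rbar b) * Px x * Qb R Rbar b - P x b := by
      field_simp
    nlinarith [h2, h3]
  calc ∑ x, ∑ b, P x b * Real.log (1 + f x * val R Rbar b)
      ≤ ∑ x, ∑ b, (P x b * Real.log (Pb b / Qb R Rbar b)
          + P x b * Real.log (P x b / (Px x * Pb b))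
          + ((1 + f x * val R Rbar b) * Px x * Qb R Rbar b - P x b)) := by
        apply Finset.sum_le_sum; intro x _
        apply Finset.sum_le_sum; intro b _
        exact key x b
    _ = (∑ x, ∑ b, P x b * Real.log (Pb b / Qb R Rbar b))
        + (∑ x, ∑ b, P x b * Real.log (P x b / (Px x * Pb b)))
        + (∑ x, ∑ b, ((1 + f x * val R Rbar b) * Px x * Qb R Rbar b - P x b)) := by
        simp [Finset.sum_add_distrib]
    _ = (∑ b, Pb b * Real.log (Pb b / Qb R Rbar b))
        + (∑ x, ∑ b, P x b * Real.log (P x b / (Px x * Pb b))) + 0 := by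
        congr 1
        · congr 1
          rw [Finset.sum_comm]
          refine Finset.sum_congr rfl fun b _ => ?_
          rw [← Finset.sum_mul]
        · have hrow : ∀ x, ∑ b, (1 + f x * val R Rbar b) * Px x * Qb R Rbar b = Px x := by
            intro x
            have h := hQsum x
            simp only [Fintype.sum_bool] at h ⊢
            linear_combination Px x * h
          refine Finset.sum_eq_zero fun x _ => ?_
          rw [Finset.sum_sub_distrib, hrow x, sub_eq_zero]
    _ = (∑ b, Pb b * Real.log (Pb b / Qb R Rbar b))
        + (∑ x, ∑ b, P x b * Real.log (P x b / (Px x * Pb b))) := by ring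
end

section
/- Let X be a finite set and P(x, y) a joint probability distribution on X × {1, −1} with all values P(x, y) strictly positive. Define the Kelly strategy f*(x) = P(y=1|x) − P(y=−1|x), so that 1 + f*(x)·y = 2·P(y|x). Then Σ_{x,y} P(x,y)·ln(1 + f*(x)·y) = ln 2 − S(Y) + I(X:Y), and for any strategy f : X → (−1, 1), Σ_{x,y} P(x,y)·ln(1 + f(x)·y) ≤ ln 2 − S(Y) + I(X:Y). Here S(Y) = −Σ_y P(y) ln P(y) and I(X:Y) = Σ_{x,y} P(x,y) ln(P(x,y)/(P(x)P(y))). -/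
/-- Per-signal inequality: any bet `f ∈ (-1,1)` does no better than Kelly. -/
lemma stmt7_aux (pt pf f : ℝ) (hpt : 0 < pt) (hpf : 0 < pf)
    (hf1 : -1 < f) (hf2 : f < 1) :
    pt * Real.log (1 + f) + pf * Real.log (1 - f)
      ≤ pt * Real.log (2 * pt / (pt + pf)) + pf * Real.log (2 * pf / (pt + pf)) := by
  have hs : 0 < pt + pf := by linarith
  have h1 : 0 < 1 + f := by linarith
  have h2 : 0 < 1 - f := by linarith
  have e1 : Real.log (1 + f)
      = Real.log (2 * pt / (pt + pf)) + Real.log ((1 + f) * (pt + pf) / (2 * pt)) := by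
    rw [← Real.log_mul (by positivity) (by positivity)]
    congr 1
    field_simp
  have e2 : Real.log (1 - f)
      = Real.log (2 * pf / (pt + pf)) + Real.log ((1 - f) * (pt + pf) / (2 * pf)) := by
    rw [← Real.log_mul (by positivity) (by positivity)]
    congr 1
    field_simp
  have b1 : Real.log ((1 + f) * (pt + pf) / (2 * pt)) ≤ (1 + f) * (pt + pf) / (2 * pt) - 1 :=
    Real.log_le_sub_one_of_pos (by positivity)
  have b2 : Real.log ((1 - f) * (pt + pf) / (2 * pf)) ≤ (1 - f) * (pt + pf) / (2 * pf) - 1 :=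
    Real.log_le_sub_one_of_pos (by positivity)
  have hz : pt * ((1 + f) * (pt + pf) / (2 * pt) - 1)
      + pf * ((1 - f) * (pt + pf) / (2 * pf) - 1) = 0 := by
    field_simp
    ring
  have m1 := mul_le_mul_of_nonneg_left b1 hpt.le
  have m2 := mul_le_mul_of_nonneg_left b2 hpf.le
  rw [e1, e2]
  nlinarith [m1, m2, hz]

/-- In even-money binary gambling with side information, the Kelly strategy
`f*(x) = P(y=1|x) - P(y=-1|x)` attains the average capital growth rate
`ln 2 - S(Y) + I(X:Y)`, and any betting strategy `f : X → (-1,1)` has average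
growth rate at most that value. -/
theorem stmt7 {X : Type*} [Fintype X]
    (P : X → Bool → ℝ) (hP : ∀ x b, 0 < P x b) (hPsum : ∑ x, ∑ b, P x b = 1) :
    (∑ x, ∑ b, P x b *
        Real.log (1 + ((P x true - P x false) / (∑ b', P x b')) *
          (if b then (1 : ℝ) else -1))
      = Real.log 2 - (-∑ b, (∑ x, P x b) * Real.log (∑ x, P x b))
        + ∑ x, ∑ b, P x b * Real.log (P x b / ((∑ b', P x b') * (∑ x', P x' b))))
    ∧ ∀ f : X → ℝ, (∀ x, f x ∈ Set.Ioo (-1 : ℝ) 1) →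
        ∑ x, ∑ b, P x b * Real.log (1 + f x * (if b then (1 : ℝ) else -1))
          ≤ Real.log 2 - (-∑ b, (∑ x, P x b) * Real.log (∑ x, P x b))
            + ∑ x, ∑ b, P x b * Real.log (P x b / ((∑ b', P x b') * (∑ x', P x' b))) := by
  classical
  have hS : ∀ x, (0:ℝ) < ∑ b', P x b' := by
    intro x
    rw [Fintype.sum_bool]
    have := hP x true; have := hP x false; linarith
  have hQ : ∀ b, (0:ℝ) < ∑ x', P x' b := by
    intro b
    have hne : (Finset.univ : Finset X).Nonempty := by
      by_contra h
      rw [Finset.not_nonempty_iff_eq_empty] at h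
      rw [h] at hPsum
      simp at hPsum
    exact Finset.sum_pos (fun x _ => hP x b) hne
  -- Kelly growth term equals 2 P x b / S x
  have hkelly : ∀ x (b : Bool),
      (1 + ((P x true - P x false) / (∑ b', P x b')) * (if b then (1:ℝ) else -1))
        = 2 * P x b / (∑ b', P x b') := by
    intro x b
    have hs := hS x
    rw [Fintype.sum_bool] at hs ⊢
    cases b <;> simp <;> field_simp <;> ring
  -- Both sides equal this common value
  have key : ∀ x (b : Bool),
      P x b * Real.log (2 * P x b / (∑ b', P x b'))
        = P x b * Real.log 2 + P x b * Real.log (P x b) - P x b * Real.log (∑ b', P x b') := by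
    intro x b
    rw [Real.log_div (mul_pos two_pos (hP x b)).ne' (hS x).ne', Real.log_mul (by norm_num) (hP x b).ne']
    ring
  have hlog : ∀ x (b : Bool),
      P x b * Real.log (P x b / ((∑ b', P x b') * (∑ x', P x' b)))
        = P x b * Real.log (P x b) - P x b * Real.log (∑ b', P x b')
          - P x b * Real.log (∑ x', P x' b) := by
    intro x b
    rw [Real.log_div (hP x b).ne' (mul_pos (hS x) (hQ b)).ne', Real.log_mul (hS x).ne' (hQ b).ne']
    ring
  have hrhs : Real.log 2 - (-∑ b, (∑ x, P x b) * Real.log (∑ x, P x b))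
        + ∑ x, ∑ b, P x b * Real.log (P x b / ((∑ b', P x b') * (∑ x', P x' b)))
      = ∑ x, ∑ b, (P x b * Real.log 2 + P x b * Real.log (P x b)
          - P x b * Real.log (∑ b', P x b')) := by
    have h1 : ∑ x, ∑ b, P x b * Real.log (P x b / ((∑ b', P x b') * (∑ x', P x' b)))
        = ∑ x, ∑ b, (P x b * Real.log (P x b) - P x b * Real.log (∑ b', P x b')
            - P x b * Real.log (∑ x', P x' b)) := by
      exact Finset.sum_congr rfl fun x _ => Finset.sum_congr rfl fun b _ => hlog x b
    have h2 : ∑ b, (∑ x, P x b) * Real.log (∑ x, P x b)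
        = ∑ x, ∑ b, P x b * Real.log (∑ x', P x' b) := by
      rw [Finset.sum_comm]
      exact Finset.sum_congr rfl fun b _ => by rw [Finset.sum_mul]
    have h3 : Real.log 2 = ∑ x, ∑ b, P x b * Real.log 2 := by
      simp only [← Finset.sum_mul]
      rw [hPsum, one_mul]
    rw [h1, h2]
    simp only [Finset.sum_sub_distrib, Finset.sum_add_distrib]
    linarith [h3]
  constructor
  · rw [hrhs]
    refine Finset.sum_congr rfl fun x _ => Finset.sum_congr rfl fun b _ => ?_
    rw [hkelly x b, key x b]
  · intro f hf
    rw [hrhs]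
    have step : ∀ x, ∑ b, P x b * Real.log (1 + f x * (if b then (1:ℝ) else -1))
        ≤ ∑ b, P x b * Real.log (2 * P x b / (∑ b', P x b')) := by
      intro x
      obtain ⟨hf1, hf2⟩ := hf x
      have h := stmt7_aux (P x true) (P x false) (f x) (hP x true) (hP x false) hf1 hf2
      simp only [Fintype.sum_bool, if_true, Bool.false_eq_true, if_false, mul_one, mul_neg_one]
      rw [show (1 : ℝ) + -f x = 1 - f x by ring]
      exact h
    calc ∑ x, ∑ b, P x b * Real.log (1 + f x * (if b then (1:ℝ) else -1))
        ≤ ∑ x, ∑ b, P x b * Real.log (2 * P x b / (∑ b', P x b')) :=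
          Finset.sum_le_sum fun x _ => step x
      _ = _ := Finset.sum_congr rfl fun x _ => Finset.sum_congr rfl fun b _ => key x b
end

section
/- Let X be a finite set and P(x, y) a joint probability distribution on X × {1, −1} with all values P(x, y) strictly positive. If the gambler bets the Kelly fractions f*(x) = P(y=1|x) − P(y=−1|x), then the efficacy γ* = ⟨exp[ln(1 + f*(x)·y) − ln P(y) + ln Q(y)]⟩_{(x,y)∼P} satisfies γ* = ⟨exp[i_{xy}]⟩ = Σ_{x,y} P(x|y)·P(y|x), where i_{xy} = ln(P(x,y)/(P(x)P(y))), P(x|y) = P(x,y)/P(y), P(y|x) = P(x,y)/P(x), and Q(1) = Q(−1) = 1/2. -/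
/-- Under the Kelly strategy `f*(x) = P(y=1|x) - P(y=-1|x)` in even-money binary
gambling with side information, the efficacy
`γ* = ⟨exp[g + s_y - s^Q_y]⟩` equals `⟨exp[i_{xy}]⟩ = Σ_{x,y} P(x|y)·P(y|x)`. -/
theorem stmt8 {X : Type*} [Fintype X]
    (P : X → Bool → ℝ) (hP : ∀ x b, 0 < P x b) (hPsum : ∑ x, ∑ b, P x b = 1) :
    let Px : X → ℝ := fun x => ∑ b, P x b
    let Py : Bool → ℝ := fun b => ∑ x, P x b
    let fstar : X → ℝ := fun x => (P x true - P x false) / Px x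
    let γ : ℝ := ∑ x, ∑ b, P x b *
      Real.exp (Real.log (1 + fstar x * (if b then (1 : ℝ) else -1))
        - Real.log (Py b) + Real.log (1 / 2))
    γ = (∑ x, ∑ b, P x b * Real.exp (Real.log (P x b / (Px x * Py b))))
    ∧ γ = ∑ x, ∑ b, (P x b / Py b) * (P x b / Px x) := by
  intro Px Py fstar γ
  rcases isEmpty_or_nonempty X with hE | hE
  · simp at hPsum
  have hPx : ∀ x, 0 < Px x := by
    intro x
    have : Px x = P x false + P x true := by simp [Px, Fintype.sum_bool]; ring
    rw [this]; have := hP x false; have := hP x true; linarith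
  have hPy : ∀ b, 0 < Py b := by
    intro b
    exact Finset.sum_pos (fun x _ => hP x b) Finset.univ_nonempty
  have key : ∀ x b, Real.exp (Real.log (1 + fstar x * (if b then (1:ℝ) else -1))
        - Real.log (Py b) + Real.log (1 / 2)) = P x b / (Px x * Py b) := by
    intro x b
    have hx := hPx x
    have hb := hPy b
    have harg : 1 + fstar x * (if b then (1:ℝ) else -1) = 2 * P x b / Px x := by
      have hPxx : Px x = P x true + P x false := by simp [Px, Fintype.sum_bool]
      have hs : P x true + P x false ≠ 0 := by
        have := hP x true; have := hP x false; positivity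
      cases b <;>
        simp only [Bool.false_eq_true, if_true, if_false, fstar, mul_one,
          mul_neg_one] <;>
        rw [hPxx] <;> field_simp <;> ring
    rw [harg, Real.exp_add, Real.exp_sub, Real.exp_log (div_pos (by have := hP x b; linarith) hx),
      Real.exp_log hb, Real.exp_log (by norm_num : (0:ℝ) < 1/2)]
    field_simp
  have keyγ : γ = ∑ x, ∑ b, P x b * (P x b / (Px x * Py b)) := by
    simp only [γ]
    exact Finset.sum_congr rfl fun x _ =>
      Finset.sum_congr rfl fun b _ => by rw [key x b]
  constructor
  · rw [keyγ]
    refine Finset.sum_congr rfl fun x _ => Finset.sum_congr rfl fun b _ => ?_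
    rw [Real.exp_log (by have := hP x b; have := hPx x; have := hPy b; positivity)]
  · rw [keyγ]
    refine Finset.sum_congr rfl fun x _ => Finset.sum_congr rfl fun b _ => ?_
    rw [div_mul_div_comm, mul_comm (Py b) (Px x), mul_div_assoc]
end

section
/- Let R, R̄ > 0 and let P(y^n) be a probability distribution on sequences y^n = (y₁, …, y_n) ∈ {R, −R̄}^n with P(y^n) > 0 for all sequences. Let f_i(y^{i−1}) be betting fractions depending on the past outcomes y^{i−1} = (y₁, …, y_{i−1}), with 1 + f_i(y^{i−1})·y_i > 0 for all sequences and all i. Then ⟨exp[Σ_{i=1}^n ln(1 + f_i(y^{i−1})·y_i) − ln P(y^n) + ln Q(y^n)]⟩_{y^n ∼ P} = 1, where Q(y^n) = ∏_{i=1}^n Q(y_i); equivalently, Σ_{y^n} ∏_{i=1}^n (1 + f_i(y^{i−1})·y_i)·Q(y_i) = 1. -/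
lemma key_sum (R Rbar c : ℝ) (hR : 0 < R) (hRbar : 0 < Rbar) :
    (1 + c * val R Rbar true) * Qb R Rbar true
      + (1 + c * val R Rbar false) * Qb R Rbar false = 1 := by
  have h : R + Rbar ≠ 0 := by positivity
  simp only [val, Qb, if_true, if_false, Bool.false_eq_true]
  field_simp
  ring

def snocEquiv (n : ℕ) : (Fin n → Bool) × Bool ≃ (Fin (n+1) → Bool) where
  toFun p := Fin.snoc p.1 p.2
  invFun y := (fun i => y i.castSucc, y (Fin.last n))
  left_inv p := by
    ext i <;> simp
  right_inv y := by
    exact Fin.snoc_init_self y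

lemma aux_sum (R Rbar : ℝ) (hR : 0 < R) (hRbar : 0 < Rbar) :
    ∀ (n : ℕ) (f : Fin n → (Fin n → Bool) → ℝ),
    (∀ (i : Fin n) (y y' : Fin n → Bool), (∀ j, j < i → y j = y' j) → f i y = f i y') →
    ∑ y : Fin n → Bool, ∏ i, (1 + f i y * val R Rbar (y i)) * Qb R Rbar (y i) = 1 := by
  intro n
  induction n with
  | zero => intro f _; simp
  | succ n ih =>
    intro f hc
    have findep : ∀ (i : Fin (n+1)) (z : Fin n → Bool) (b b' : Bool),
        f i (Fin.snoc z b) = f i (Fin.snoc z b') := by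
      intro i z b b'
      apply hc
      intro j hj
      have hjn : (j : ℕ) < n := lt_of_lt_of_le hj (Nat.lt_succ_iff.mp i.isLt)
      have hje : j = Fin.castSucc ⟨(j : ℕ), hjn⟩ := by
        apply Fin.ext; rfl
      rw [hje, Fin.snoc_castSucc, Fin.snoc_castSucc]
    rw [← Equiv.sum_comp (snocEquiv n), Fintype.sum_prod_type]
    have hterm : ∀ (z : Fin n → Bool) (b : Bool),
        (∏ i : Fin (n+1),
          (1 + f i (snocEquiv n (z, b)) * val R Rbar (snocEquiv n (z, b) i))
            * Qb R Rbar (snocEquiv n (z, b) i))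
        = (∏ i : Fin n, (1 + f i.castSucc (Fin.snoc z true) * val R Rbar (z i))
            * Qb R Rbar (z i))
          * ((1 + f (Fin.last n) (Fin.snoc z true) * val R Rbar b) * Qb R Rbar b) := by
      intro z b
      change (∏ i : Fin (n+1), (1 + f i (Fin.snoc z b) * val R Rbar ((Fin.snoc z b : Fin (n+1) → Bool) i))
            * Qb R Rbar ((Fin.snoc z b : Fin (n+1) → Bool) i)) = _
      rw [Fin.prod_univ_castSucc]
      congr 1
      · apply Finset.prod_congr rfl
        intro i _
        rw [Fin.snoc_castSucc, findep i.castSucc z b true]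
      · rw [Fin.snoc_last, findep (Fin.last n) z b true]
    calc ∑ z : Fin n → Bool, ∑ b : Bool,
          (∏ i : Fin (n+1),
            (1 + f i (snocEquiv n (z, b)) * val R Rbar (snocEquiv n (z, b) i))
              * Qb R Rbar (snocEquiv n (z, b) i))
        = ∑ z : Fin n → Bool, (∏ i : Fin n,
            (1 + f i.castSucc (Fin.snoc z true) * val R Rbar (z i)) * Qb R Rbar (z i)) := by
          apply Finset.sum_congr rfl
          intro z _
          rw [Fintype.sum_bool, hterm z true, hterm z false, ← mul_add,
            key_sum R Rbar _ hR hRbar, mul_one]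
      _ = 1 := by
          apply ih (fun i z => f i.castSucc (Fin.snoc z true))
          intro i z z' hzz
          apply hc
          intro j hj
          have hjn : (j : ℕ) < n := lt_of_lt_of_le hj (Nat.lt_succ_iff.mp i.castSucc.isLt)
          have hje : j = Fin.castSucc ⟨(j : ℕ), hjn⟩ := by apply Fin.ext; rfl
          rw [hje, Fin.snoc_castSucc, Fin.snoc_castSucc]
          exact hzz _ hj

/-- Jarzynski-type equality for binary gambling with memory effects:
`⟨exp[n·g_n + s_{y^n} - s^Q_{y^n}]⟩ = 1`, equivalently
`Σ_{y^n} Π_i (1 + f_i(y^{i-1})·y_i)·Q(y_i) = 1`, for any betting fractions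
`f_i` depending only on the past outcomes `y^{i-1}`. -/
theorem stmt10 (n : ℕ) (R Rbar : ℝ) (hR : 0 < R) (hRbar : 0 < Rbar)
    (P : (Fin n → Bool) → ℝ) (hP : ∀ y, 0 < P y) (hPsum : ∑ y, P y = 1)
    (f : Fin n → (Fin n → Bool) → ℝ)
    (hcausal : ∀ (i : Fin n) (y y' : Fin n → Bool),
      (∀ j, j < i → y j = y' j) → f i y = f i y')
    (hf : ∀ i y, 0 < 1 + f i y * val R Rbar (y i)) :
    (∑ y, P y * Real.exp ((∑ i, Real.log (1 + f i y * val R Rbar (y i)))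
        - Real.log (P y) + Real.log (∏ i, Qb R Rbar (y i))) = 1)
    ∧ (∑ y, ∏ i, (1 + f i y * val R Rbar (y i)) * Qb R Rbar (y i) = 1) := by
  have hQpos : ∀ b, 0 < Qb R Rbar b := by
    intro b
    cases b <;> simp [Qb] <;> positivity
  have h2 : ∑ y, ∏ i, (1 + f i y * val R Rbar (y i)) * Qb R Rbar (y i) = 1 :=
    aux_sum R Rbar hR hRbar n f hcausal
  refine ⟨?_, h2⟩
  have h1 : ∑ y, P y * Real.exp ((∑ i, Real.log (1 + f i y * val R Rbar (y i)))
        - Real.log (P y) + Real.log (∏ i, Qb R Rbar (y i)))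
      = ∑ y, ∏ i, (1 + f i y * val R Rbar (y i)) * Qb R Rbar (y i) := by
    apply Finset.sum_congr rfl
    intro y _
    have hE : Real.exp (∑ i, Real.log (1 + f i y * val R Rbar (y i)))
        = ∏ i, (1 + f i y * val R Rbar (y i)) := by
      rw [Real.exp_sum]
      exact Finset.prod_congr rfl fun i _ => Real.exp_log (hf i y)
    have hQprodpos : 0 < ∏ i, Qb R Rbar (y i) :=
      Finset.prod_pos fun i _ => hQpos (y i)
    rw [Real.exp_add, Real.exp_sub, hE, Real.exp_log (hP y), Real.exp_log hQprodpos,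
      Finset.prod_mul_distrib]
    field_simp [(hP y).ne']
  rw [h1, h2]
end

section
/- Let R, R̄ > 0 and let P(y^n) be a probability distribution on {R, −R̄}^n with P(y^n) > 0 for all sequences, and let f_i(y^{i−1}) be betting fractions with 1 + f_i(y^{i−1})·y_i > 0. Then the average capital growth rate satisfies ⟨(1/n) Σ_{i=1}^n ln(1 + f_i(y^{i−1})·y_i)⟩_{y^n ∼ P} ≤ (1/n)·D_KL(P(y^n)‖Q(y^n)), where Q(y^n) = ∏_i Q(y_i) and D_KL(P‖Q) = Σ_{y^n} P(y^n) ln(P(y^n)/Q(y^n)). -/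
lemma val_true (R Rbar : ℝ) : val R Rbar true = R := rfl
lemma val_false (R Rbar : ℝ) : val R Rbar false = -Rbar := rfl
lemma Qb_true (R Rbar : ℝ) : Qb R Rbar true = Rbar / (R + Rbar) := rfl
lemma Qb_false (R Rbar : ℝ) : Qb R Rbar false = R / (R + Rbar) := rfl


lemma cons_update' {n : ℕ} (b : Bool) (y : Fin n → Bool) (i : Fin n) (b' : Bool) :
    (Fin.cons b (Function.update y i b') : Fin (n+1) → Bool)
      = Function.update (Fin.cons b y : Fin (n+1) → Bool) i.succ b' := by
  funext j
  rcases Fin.eq_zero_or_eq_succ j with h0 | ⟨k, rfl⟩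
  · subst h0
    rw [Function.update_of_ne (Fin.succ_ne_zero i).symm]
    rfl
  · by_cases hk : k = i
    · subst hk
      rw [Fin.cons_succ, Function.update_self, Function.update_self]
    · rw [Fin.cons_succ, Function.update_of_ne hk,
        Function.update_of_ne (fun h => hk (Fin.succ_inj.mp h)), Fin.cons_succ]

lemma cons_zero_update {n : ℕ} (b : Bool) :
    (Fin.cons b (fun _ : Fin n => true) : Fin (n+1) → Bool) =
      Function.update (Fin.cons true (fun _ : Fin n => true) : Fin (n+1) → Bool) 0 b := by
  funext j
  rcases Fin.eq_zero_or_eq_succ j with h0 | ⟨k, rfl⟩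
  · subst h0; rw [Function.update_self]; rfl
  · rw [Function.update_of_ne (Fin.succ_ne_zero k)]; rfl

/-- Telescoping sum lemma: if each factor depends only on coordinates `≤ i`
and sums to 1 over the `i`-th coordinate, the total sum of products is 1. -/
lemma key_sum_s11 : ∀ (n : ℕ) (h : Fin n → (Fin n → Bool) → ℝ)
    (_ : ∀ i (y y' : Fin n → Bool), (∀ j, j ≤ i → y j = y' j) → h i y = h i y')
    (_ : ∀ i (y : Fin n → Bool),
      h i (Function.update y i true) + h i (Function.update y i false) = 1),
    ∑ y : Fin n → Bool, ∏ i, h i y = 1 := by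
  intro n
  induction n with
  | zero => intro h _ _; simp
  | succ n ih =>
    intro h hdep hsum
    have e : ∑ y : Fin (n+1) → Bool, ∏ i, h i y
        = ∑ p : Bool × (Fin n → Bool), ∏ i, h i (Fin.cons p.1 p.2) := by
      rw [← Equiv.sum_comp (Fin.consEquiv fun _ : Fin (n+1) => Bool)
        (fun y => ∏ i, h i y)]
      rfl
    rw [e, Fintype.sum_prod_type]
    have main : ∀ b : Bool, ∑ y' : Fin n → Bool, ∏ i, h i (Fin.cons b y')
        = h 0 (Fin.cons b (fun _ => true)) := by
      intro b
      have step : ∀ y' : Fin n → Bool, ∏ i, h i (Fin.cons b y')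
          = h 0 (Fin.cons b (fun _ => true)) * ∏ i : Fin n, h i.succ (Fin.cons b y') := by
        intro y'
        rw [Fin.prod_univ_succ]
        congr 1
        apply hdep
        intro j hj
        have : j = 0 := le_antisymm hj (Fin.zero_le j)
        subst this; rfl
      calc ∑ y' : Fin n → Bool, ∏ i, h i (Fin.cons b y')
          = ∑ y' : Fin n → Bool, h 0 (Fin.cons b (fun _ => true))
              * ∏ i : Fin n, h i.succ (Fin.cons b y') := by
            exact Finset.sum_congr rfl fun y' _ => step y'
        _ = h 0 (Fin.cons b (fun _ => true))
              * ∑ y' : Fin n → Bool, ∏ i : Fin n, h i.succ (Fin.cons b y') := by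
            rw [Finset.mul_sum]
        _ = h 0 (Fin.cons b (fun _ => true)) * 1 := by
            congr 1
            apply ih (fun i y' => h i.succ (Fin.cons b y'))
            · intro i y y' hagree
              apply hdep
              intro j hj
              rcases Fin.eq_zero_or_eq_succ j with h0 | ⟨k, rfl⟩
              · subst h0; rfl
              · simp only [Fin.cons_succ]
                exact hagree k (Fin.succ_le_succ_iff.mp hj)
            · intro i y
              simp only [cons_update']
              exact hsum i.succ (Fin.cons b y)
        _ = h 0 (Fin.cons b (fun _ => true)) := mul_one _
    show ∑ b : Bool, ∑ y' : Fin n → Bool, ∏ i, h i (Fin.cons b y') = 1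
    rw [Fintype.sum_bool, main true, main false]
    rw [cons_zero_update true, cons_zero_update false]
    exact hsum 0 _

/-- Gibbs' inequality. -/
lemma gibbs {α : Type*} [Fintype α] (P S : α → ℝ) (hP : ∀ a, 0 < P a)
    (hS : ∀ a, 0 < S a) (hPs : ∑ a, P a = 1) (hSs : ∑ a, S a = 1) :
    0 ≤ ∑ a, P a * Real.log (P a / S a) := by
  have key : ∑ a, P a * Real.log (S a / P a) ≤ 0 := by
    calc ∑ a, P a * Real.log (S a / P a)
        ≤ ∑ a, P a * (S a / P a - 1) := by
          apply Finset.sum_le_sum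
          intro a _
          exact mul_le_mul_of_nonneg_left
            (Real.log_le_sub_one_of_pos (div_pos (hS a) (hP a))) (hP a).le
      _ = ∑ a, (S a - P a) := by
          apply Finset.sum_congr rfl
          intro a _
          rw [mul_sub, mul_one, mul_div_cancel₀ _ (hP a).ne']
      _ = 0 := by rw [Finset.sum_sub_distrib, hSs, hPs, sub_self]
  have flip : ∀ a, P a * Real.log (P a / S a) = -(P a * Real.log (S a / P a)) := by
    intro a
    have : Real.log (P a / S a) = -Real.log (S a / P a) := by
      rw [← Real.log_inv, inv_div]
    rw [this]; ring
  calc (0:ℝ) = -(0:ℝ) := by ring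
    _ ≤ -∑ a, P a * Real.log (S a / P a) := by linarith
    _ = ∑ a, P a * Real.log (P a / S a) := by
        rw [← Finset.sum_neg_distrib]
        exact Finset.sum_congr rfl fun a _ => (flip a).symm

/-- In binary gambling with memory effects, the average capital growth rate is
bounded by `(1/n)·D_KL(P(y^n)‖Q(y^n))` with `Q(y^n) = Π_i Q(y_i)`. -/
theorem stmt11 (n : ℕ) (hn : 0 < n) (R Rbar : ℝ) (hR : 0 < R) (hRbar : 0 < Rbar)
    (P : (Fin n → Bool) → ℝ) (hP : ∀ y, 0 < P y) (hPsum : ∑ y, P y = 1)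
    (f : Fin n → (Fin n → Bool) → ℝ)
    (hcausal : ∀ (i : Fin n) (y y' : Fin n → Bool),
      (∀ j, j < i → y j = y' j) → f i y = f i y')
    (hf : ∀ i y, 0 < 1 + f i y * val R Rbar (y i)) :
    ∑ y, P y * ((1 / (n : ℝ)) * ∑ i, Real.log (1 + f i y * val R Rbar (y i)))
      ≤ (1 / (n : ℝ)) * ∑ y, P y * Real.log (P y / ∏ i, Qb R Rbar (y i)) := by
  have hRRbar : (0:ℝ) < R + Rbar := by linarith
  set W : (Fin n → Bool) → ℝ := fun y => ∏ i, (1 + f i y * val R Rbar (y i)) with hWdef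
  set Qp : (Fin n → Bool) → ℝ := fun y => ∏ i, Qb R Rbar (y i) with hQpdef
  have hQb : ∀ b, 0 < Qb R Rbar b := by
    intro b; cases b
    · rw [Qb_false]; positivity
    · rw [Qb_true]; positivity
  have hW : ∀ y, 0 < W y := fun y => Finset.prod_pos fun i _ => hf i y
  have hQp : ∀ y, 0 < Qp y := fun y => Finset.prod_pos fun i _ => hQb (y i)
  -- expectation of capital under Q is 1
  have hQW1 : ∑ y, Qp y * W y = 1 := by
    have := key_sum_s11 n (fun i y => Qb R Rbar (y i) * (1 + f i y * val R Rbar (y i)))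
      (by
        intro i y y' hagree
        have hf' : f i y = f i y' := hcausal i y y' fun j hj => hagree j hj.le
        rw [hagree i le_rfl, hf'])
      (by
        intro i y
        have hft : f i (Function.update y i true) = f i y :=
          hcausal i _ y fun j hj => Function.update_of_ne (Fin.ne_of_lt hj) _ _
        have hff : f i (Function.update y i false) = f i y :=
          hcausal i _ y fun j hj => Function.update_of_ne (Fin.ne_of_lt hj) _ _
        rw [Function.update_self, Function.update_self, hft, hff,
          val_true, val_false, Qb_true, Qb_false]
        field_simp
        ring)
    rw [← this]
    apply Finset.sum_congr rfl
    intro y _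
    rw [hWdef, hQpdef]
    dsimp only
    rw [← Finset.prod_mul_distrib]
  -- key inequality
  have hmain : ∑ y, P y * Real.log (W y) ≤ ∑ y, P y * Real.log (P y / Qp y) := by
    have hg := gibbs P (fun y => Qp y * W y) hP
      (fun y => mul_pos (hQp y) (hW y)) hPsum hQW1
    have split : ∀ y, P y * Real.log (P y / (Qp y * W y))
        = P y * Real.log (P y / Qp y) - P y * Real.log (W y) := by
      intro y
      rw [← mul_sub]
      congr 1
      rw [Real.log_div (hP y).ne' (mul_pos (hQp y) (hW y)).ne',
        Real.log_mul (hQp y).ne' (hW y).ne',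
        Real.log_div (hP y).ne' (hQp y).ne']
      ring
    have h0 : 0 ≤ ∑ y, (P y * Real.log (P y / Qp y) - P y * Real.log (W y)) := by
      rw [← Finset.sum_congr rfl fun y _ => split y]
      exact hg
    rw [Finset.sum_sub_distrib] at h0
    linarith
  -- rewrite LHS
  have hLHS : ∑ y, P y * ((1 / (n : ℝ)) * ∑ i, Real.log (1 + f i y * val R Rbar (y i)))
      = (1 / (n : ℝ)) * ∑ y, P y * Real.log (W y) := by
    rw [Finset.mul_sum]
    apply Finset.sum_congr rfl
    intro y _
    rw [hWdef]
    dsimp only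
    rw [Real.log_prod fun i _ => (hf i y).ne']
    ring
  rw [hLHS]
  apply mul_le_mul_of_nonneg_left hmain
  positivity
end

section
/- Consider the Markovian coin tossing: y₀, y₁, …, y_n ∈ {1, −1} a Markov chain with uniform initial face and flip probability ε ∈ (0, 1). Suppose the gambler bets f₁ = 0 in the first game and the Kelly fractions f_i(y^{i−1}) determined by 1 + f_i·y_i = 2·P(y_i | y_{i−1}) for i ≥ 2 (i.e. f_i = (1 − 2ε)·y_{i−1}). Then the average capital growth rate equals ⟨g_n⟩ = ((n − 1)/n)·(ln 2 − S₂(ε)), which saturates the upper bound ln 2 − (1/n)·S(Y^n), where Y^n = (y₁,…,y_n). -/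
noncomputable def stmt14q (ε : ℝ) (x y : Bool) : ℝ := if x = y then 1 - ε else ε

noncomputable def stmt14mu (ε : ℝ) (m : ℕ) (z : Fin (m+1) → Bool) : ℝ :=
  (1/2) * ∏ i : Fin m, stmt14q ε (z i.succ) (z i.castSucc)

lemma stmt14_sum_cons {m : ℕ} (F : (Fin (m+1) → Bool) → ℝ) :
    ∑ z, F z = ∑ b : Bool, ∑ w : Fin m → Bool, F (Fin.cons b w) := by
  calc ∑ z, F z = ∑ p : Bool × (Fin m → Bool), F (Fin.cons p.1 p.2) :=
        (Fintype.sum_equiv (Fin.consEquiv fun _ => Bool) _ _ fun p => rfl).symm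
    _ = _ := Fintype.sum_prod_type _

lemma stmt14mu_cons (ε : ℝ) (m : ℕ) (b : Bool) (w : Fin (m+1) → Bool) :
    stmt14mu ε (m+1) (Fin.cons b w) = stmt14q ε (w 0) b * stmt14mu ε m w := by
  simp only [stmt14mu, Fin.prod_univ_succ]
  have h0 : (Fin.cons b w : Fin (m+2) → Bool) ((0 : Fin (m+1)).succ) = w 0 := by
    simp [Fin.cons_succ]
  have h1 : (Fin.cons b w : Fin (m+2) → Bool) ((0 : Fin (m+1)).castSucc) = b := by
    simp
  rw [h0, h1]
  have h2 : ∀ j : Fin m, (Fin.cons b w : Fin (m+2) → Bool) (j.succ.succ) = w j.succ :=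
    fun j => by simp [Fin.cons_succ]
  have h3 : ∀ j : Fin m, (Fin.cons b w : Fin (m+2) → Bool) (j.succ.castSucc) = w j.castSucc :=
    fun j => by rw [← Fin.succ_castSucc]; simp [Fin.cons_succ]
  simp only [h2, h3]
  ring

lemma stmt14q_sum (ε : ℝ) (c : Bool) : stmt14q ε c true + stmt14q ε c false = 1 := by
  cases c <;> simp [stmt14q] <;> ring

lemma stmt14mu_total (ε : ℝ) : ∀ m : ℕ, ∑ z : Fin (m+1) → Bool, stmt14mu ε m z = 1 := by
  intro m
  induction m with
  | zero =>
      simp [stmt14mu]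
  | succ m ih =>
      rw [stmt14_sum_cons]
      rw [Finset.sum_comm]
      have : ∀ w : Fin (m+1) → Bool, ∑ b : Bool, stmt14mu ε (m+1) (Fin.cons b w) = stmt14mu ε m w := by
        intro w
        simp only [stmt14mu_cons, Fintype.sum_bool]
        rw [← add_mul, stmt14q_sum, one_mul]
      simp only [this, ih]

lemma stmt14_chainC (ε : ℝ) : ∀ (m : ℕ) (A B : Fin m → ℝ),
    ∑ z : Fin (m+1) → Bool, stmt14mu ε m z *
        ∑ i : Fin m, (if z i.succ = z i.castSucc then A i else B i)
      = ∑ i : Fin m, ((1-ε) * A i + ε * B i) := by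
  intro m
  induction m with
  | zero => intro A B; simp
  | succ m ih =>
      intro A B
      rw [stmt14_sum_cons, Finset.sum_comm]
      have key : ∀ w : Fin (m+1) → Bool,
          (∑ b : Bool, stmt14mu ε (m+1) (Fin.cons b w) *
            ∑ i : Fin (m+1), (if (Fin.cons b w : Fin (m+2) → Bool) i.succ
                = (Fin.cons b w : Fin (m+2) → Bool) i.castSucc then A i else B i))
          = ((1-ε) * A 0 + ε * B 0) * stmt14mu ε m w
            + stmt14mu ε m w *
              ∑ j : Fin m, (if w j.succ = w j.castSucc then A j.succ else B j.succ) := by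
        intro w
        have h0 : ∀ b : Bool, (Fin.cons b w : Fin (m+2) → Bool) ((0 : Fin (m+1)).succ) = w 0 := by
          intro b; simp [Fin.cons_succ]
        have h1 : ∀ b : Bool, (Fin.cons b w : Fin (m+2) → Bool) ((0 : Fin (m+1)).castSucc) = b := by
          intro b; simp
        have h2 : ∀ (b : Bool) (j : Fin m),
            (Fin.cons b w : Fin (m+2) → Bool) (j.succ.succ) = w j.succ := fun b j => by
          simp [Fin.cons_succ]
        have h3 : ∀ (b : Bool) (j : Fin m),
            (Fin.cons b w : Fin (m+2) → Bool) (j.succ.castSucc) = w j.castSucc := fun b j => by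
          rw [← Fin.succ_castSucc]; simp [Fin.cons_succ]
        simp only [Fin.sum_univ_succ, h0, h1, h2, h3, stmt14mu_cons]
        rw [Fintype.sum_bool]
        cases hw : w 0 <;> simp [stmt14q] <;> ring
      simp only [key]
      rw [Finset.sum_add_distrib]
      rw [← Finset.mul_sum]
      rw [stmt14mu_total]
      rw [mul_one]
      rw [ih (fun j => A j.succ) (fun j => B j.succ)]
      rw [Fin.sum_univ_succ]

lemma stmt14q_pos {ε : ℝ} (hε0 : 0 < ε) (hε1 : ε < 1) (x y : Bool) : 0 < stmt14q ε x y := by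
  unfold stmt14q; split <;> linarith

lemma stmt14mu_pos {ε : ℝ} (hε0 : 0 < ε) (hε1 : ε < 1) (m : ℕ) (z : Fin (m+1) → Bool) :
    0 < stmt14mu ε m z := by
  apply mul_pos (by norm_num)
  exact Finset.prod_pos fun i _ => stmt14q_pos hε0 hε1 _ _

lemma stmt14_log_mu {ε : ℝ} (hε0 : 0 < ε) (hε1 : ε < 1) (m : ℕ) (z : Fin (m+1) → Bool) :
    Real.log (stmt14mu ε m z)
      = -Real.log 2 + ∑ i : Fin m,
          (if z i.succ = z i.castSucc then Real.log (1-ε) else Real.log ε) := by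
  unfold stmt14mu
  have hprod : (0:ℝ) < ∏ i : Fin m, stmt14q ε (z i.succ) (z i.castSucc) :=
    Finset.prod_pos fun i _ => stmt14q_pos hε0 hε1 _ _
  rw [Real.log_mul (by norm_num) (ne_of_gt hprod), Real.log_prod
    (fun i _ => ne_of_gt (stmt14q_pos hε0 hε1 _ _))]
  congr 1
  · rw [one_div, Real.log_inv]
  · exact Finset.sum_congr rfl fun i _ => by unfold stmt14q; split <;> rfl

lemma stmt14_entropy {ε : ℝ} (hε0 : 0 < ε) (hε1 : ε < 1) (m : ℕ) :
    -∑ z : Fin (m+1) → Bool, stmt14mu ε m z * Real.log (stmt14mu ε m z)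
      = Real.log 2 + m * (-(ε * Real.log ε) - (1 - ε) * Real.log (1 - ε)) := by
  have h1 : ∀ z : Fin (m+1) → Bool, stmt14mu ε m z * Real.log (stmt14mu ε m z)
      = stmt14mu ε m z * (-Real.log 2)
        + stmt14mu ε m z * ∑ i : Fin m,
            (if z i.succ = z i.castSucc then Real.log (1-ε) else Real.log ε) := by
    intro z; rw [stmt14_log_mu hε0 hε1, mul_add]
  simp only [h1]
  rw [Finset.sum_add_distrib, ← Finset.sum_mul, stmt14mu_total,
    stmt14_chainC ε m (fun _ => Real.log (1-ε)) (fun _ => Real.log ε)]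
  rw [Finset.sum_const, Finset.card_univ, Fintype.card_fin, nsmul_eq_mul]
  ring

lemma stmt14_marg (ε : ℝ) (m : ℕ) (w : Fin (m+1) → Bool) :
    ∑ b : Bool, stmt14mu ε (m+1) (Fin.cons b w) = stmt14mu ε m w := by
  simp only [stmt14mu_cons, Fintype.sum_bool]
  rw [← add_mul, stmt14q_sum, one_mul]



/-- In the Markovian coin tossing (uniform initial face `y₀`, flip probability `ε`),
the gambler who bets `f₁ = 0` in the first game and the Kelly fractions
`f_i = (1-2ε)·y_{i-1}` for `i ≥ 2` achieves the average capital growth rate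
`((n-1)/n)·(ln 2 - S₂(ε))`, which saturates the upper bound `ln 2 - (1/n)·S(Y^n)`.
Here `z : Fin (n+1) → Bool` represents `(y₀,…,y_n)`, game `i : Fin n` has outcome
`z i.succ` with previous outcome `z i.castSucc`. -/
theorem stmt14 (n : ℕ) (hn : 1 ≤ n) (ε : ℝ) (hε : ε ∈ Set.Ioo (0 : ℝ) 1) :
    (let val : Bool → ℝ := fun b => if b then 1 else -1;
    let Pfull : (Fin (n + 1) → Bool) → ℝ := fun z =>
      (1 / 2) * ∏ i : Fin n, (if z i.succ = z i.castSucc then 1 - ε else ε);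
    let f : (Fin (n + 1) → Bool) → Fin n → ℝ := fun z i =>
      if (i : ℕ) = 0 then 0 else (1 - 2 * ε) * val (z i.castSucc);
    let avg : ℝ := ∑ z : Fin (n + 1) → Bool, Pfull z *
      ((1 / (n : ℝ)) * ∑ i : Fin n, Real.log (1 + f z i * val (z i.succ)));
    let S₂ : ℝ := -(ε * Real.log ε) - (1 - ε) * Real.log (1 - ε);
    let Pmarg : (Fin n → Bool) → ℝ := fun w => ∑ b : Bool, Pfull (Fin.cons b w);
    avg = (((n : ℝ) - 1) / (n : ℝ)) * (Real.log 2 - S₂)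
    ∧ avg = Real.log 2
        - (1 / (n : ℝ)) * (-(∑ w : Fin n → Bool, Pmarg w * Real.log (Pmarg w)))) := by
  obtain ⟨hε0, hε1⟩ := hε
  obtain ⟨m, rfl⟩ : ∃ m, n = m + 1 := ⟨n - 1, (Nat.succ_pred_eq_of_pos hn).symm⟩
  simp only []
  have hPmu : ∀ z : Fin (m+2) → Bool,
      ((1:ℝ)/2) * ∏ i : Fin (m+1), (if z i.succ = z i.castSucc then 1 - ε else ε)
        = stmt14mu ε (m+1) z := fun _ => rfl
  have hterm : ∀ (z : Fin (m+2) → Bool) (i : Fin (m+1)),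
      Real.log (1 + (if (i : ℕ) = 0 then (0:ℝ) else
          (1 - 2*ε) * (if z i.castSucc then (1:ℝ) else -1)) * (if z i.succ then (1:ℝ) else -1))
        = (if z i.succ = z i.castSucc
            then (if (i:ℕ) = 0 then (0:ℝ) else Real.log (2*(1-ε)))
            else (if (i:ℕ) = 0 then (0:ℝ) else Real.log (2*ε))) := by
    intro z i
    by_cases hi : (i : ℕ) = 0
    · simp [hi]
    · cases hc : z i.castSucc <;> cases hs : z i.succ <;>
        simp only [hi, hc, hs, if_false, if_true, Bool.true_eq_false, Bool.false_eq_true,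
          if_neg, ite_false, ite_true] <;>
        · congr 1; ring
  have hmain : (∑ z : Fin (m+2) → Bool, stmt14mu ε (m+1) z *
      ((1 / ((m:ℝ)+1)) * ∑ i : Fin (m+1),
        (if z i.succ = z i.castSucc
            then (if (i:ℕ) = 0 then (0:ℝ) else Real.log (2*(1-ε)))
            else (if (i:ℕ) = 0 then (0:ℝ) else Real.log (2*ε)))))
      = ((m:ℝ)/((m:ℝ)+1)) * (Real.log 2 - (-(ε * Real.log ε) - (1 - ε) * Real.log (1 - ε))) := by
    have step1 : ∀ z : Fin (m+2) → Bool, stmt14mu ε (m+1) z *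
        ((1 / ((m:ℝ)+1)) * ∑ i : Fin (m+1),
          (if z i.succ = z i.castSucc
              then (if (i:ℕ) = 0 then (0:ℝ) else Real.log (2*(1-ε)))
              else (if (i:ℕ) = 0 then (0:ℝ) else Real.log (2*ε))))
        = (1 / ((m:ℝ)+1)) * (stmt14mu ε (m+1) z * ∑ i : Fin (m+1),
          (if z i.succ = z i.castSucc
              then (if (i:ℕ) = 0 then (0:ℝ) else Real.log (2*(1-ε)))
              else (if (i:ℕ) = 0 then (0:ℝ) else Real.log (2*ε)))) := fun z => by ring
    simp only [step1]
    rw [← Finset.mul_sum,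
      stmt14_chainC ε (m+1) (fun i => if (i:ℕ) = 0 then (0:ℝ) else Real.log (2*(1-ε)))
        (fun i => if (i:ℕ) = 0 then (0:ℝ) else Real.log (2*ε)),
      Fin.sum_univ_succ]
    simp only [Fin.val_zero, eq_self_iff_true, if_true, ite_true, Fin.val_succ, Nat.succ_ne_zero, if_false, ite_false, mul_zero,
      add_zero, zero_add, Finset.sum_const, Finset.card_univ, Fintype.card_fin, nsmul_eq_mul]
    rw [Real.log_mul (by norm_num) (by linarith), Real.log_mul (by norm_num) (by linarith)]
    have hm1 : ((m:ℝ)+1) ≠ 0 := by positivity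
    rw [div_mul_eq_mul_div, div_mul_eq_mul_div, div_eq_div_iff hm1 hm1]
    ring
  have hm1 : ((m:ℝ)+1) ≠ 0 := by positivity
  constructor
  · simp only [hPmu, hterm]
    push_cast
    rw [hmain]
    congr 1
    ring
  · simp only [hPmu, hterm, stmt14_marg]
    rw [stmt14_entropy hε0 hε1 m]
    push_cast
    rw [hmain]
    field_simp
    ring
end

section
/- Let R, R̄ > 0, let X be a finite set, and let P(x^n, y^n) be a joint probability distribution on X^n × {R, −R̄}^n with all values strictly positive. Let f_i(x^i, y^{i−1}) be betting fractions depending on the side information received so far x^i = (x₁,…,x_i) and the past outcomes y^{i−1}, with 1 + f_i(x^i, y^{i−1})·y_i > 0 everywhere. Then ⟨exp[Σ_{i=1}^n ln(1 + f_i(x^i, y^{i−1})·y_i) − ln P(y^n) − i_{x^n→y^n} + ln Q(y^n)]⟩_{(x^n,y^n)∼P} = 1, where i_{x^n→y^n} = ln(P(y^n‖x^n)/P(y^n)) and P(y^n‖x^n) = ∏_{i=1}^n P(y_i | y^{i−1}, x^i) is the causally conditioned probability. -/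
/-- The causally conditioned factor `P(y_i | y^{i-1}, x^i)` of the joint distribution
`P(x^n, y^n)`, evaluated at the pair of sequences `(x, y)`. -/
noncomputable def condY {X : Type*} [Fintype X] [DecidableEq X] (n : ℕ)
    (P : (Fin n → X) → (Fin n → Bool) → ℝ) (i : Fin n)
    (x : Fin n → X) (y : Fin n → Bool) : ℝ :=
  (∑ x' : Fin n → X, ∑ y' : Fin n → Bool,
      if (∀ j, j ≤ i → x' j = x j) ∧ (∀ j, j ≤ i → y' j = y j) then P x' y' else 0) /
  (∑ x' : Fin n → X, ∑ y' : Fin n → Bool,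
      if (∀ j, j ≤ i → x' j = x j) ∧ (∀ j, j < i → y' j = y j) then P x' y' else 0)

set_option linter.unusedSectionVars false

namespace Stmt15Aux

variable {X : Type*} [Fintype X] [DecidableEq X]

noncomputable def Af (n : ℕ) (P : (Fin n → X) → (Fin n → Bool) → ℝ) (i : Fin n)
    (x : Fin n → X) (y : Fin n → Bool) : ℝ :=
  ∑ x' : Fin n → X, ∑ y' : Fin n → Bool,
      if (∀ j, j ≤ i → x' j = x j) ∧ (∀ j, j ≤ i → y' j = y j) then P x' y' else 0

noncomputable def Bf (n : ℕ) (P : (Fin n → X) → (Fin n → Bool) → ℝ) (i : Fin n)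
    (x : Fin n → X) (y : Fin n → Bool) : ℝ :=
  ∑ x' : Fin n → X, ∑ y' : Fin n → Bool,
      if (∀ j, j ≤ i → x' j = x j) ∧ (∀ j, j < i → y' j = y j) then P x' y' else 0

variable {n : ℕ} {P : (Fin n → X) → (Fin n → Bool) → ℝ}

lemma condY_eq (n : ℕ) (P : (Fin n → X) → (Fin n → Bool) → ℝ) (i : Fin n)
    (x : Fin n → X) (y : Fin n → Bool) :
    condY n P i x y = Af n P i x y / Bf n P i x y := rfl

lemma Af_pos (hP : ∀ x y, 0 < P x y) (i : Fin n) (x : Fin n → X) (y : Fin n → Bool) :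
    0 < Af n P i x y := by
  refine Finset.sum_pos' (fun x' _ => Finset.sum_nonneg fun y' _ => ?_) ⟨x, Finset.mem_univ x, ?_⟩
  · split_ifs
    · exact (hP x' y').le
    · exact le_rfl
  · refine Finset.sum_pos' (fun y' _ => ?_) ⟨y, Finset.mem_univ y, ?_⟩
    · split_ifs
      · exact (hP x y').le
      · exact le_rfl
    · simp [hP x y]

lemma Bf_pos (hP : ∀ x y, 0 < P x y) (i : Fin n) (x : Fin n → X) (y : Fin n → Bool) :
    0 < Bf n P i x y := by
  refine Finset.sum_pos' (fun x' _ => Finset.sum_nonneg fun y' _ => ?_) ⟨x, Finset.mem_univ x, ?_⟩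
  · split_ifs
    · exact (hP x' y').le
    · exact le_rfl
  · refine Finset.sum_pos' (fun y' _ => ?_) ⟨y, Finset.mem_univ y, ?_⟩
    · split_ifs
      · exact (hP x y').le
      · exact le_rfl
    · simp [hP x y]


lemma Af_update (i k : Fin n) (hik : i < k) (x : Fin n → X) (y : Fin n → Bool) (a : X) (b : Bool) :
    Af n P i (Function.update x k a) (Function.update y k b) = Af n P i x y := by
  unfold Af
  refine Finset.sum_congr rfl fun x' _ => Finset.sum_congr rfl fun y' _ => ?_
  have hx : ∀ j : Fin n, j ≤ i → Function.update x k a j = x j := fun j hj =>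
    Function.update_of_ne (ne_of_lt (lt_of_le_of_lt hj hik)) _ _
  have hy : ∀ j : Fin n, j ≤ i → Function.update y k b j = y j := fun j hj =>
    Function.update_of_ne (ne_of_lt (lt_of_le_of_lt hj hik)) _ _
  refine if_congr (and_congr ?_ ?_) rfl rfl
  · exact forall_congr' fun j => imp_congr_right fun hj => by rw [hx j hj]
  · exact forall_congr' fun j => imp_congr_right fun hj => by rw [hy j hj]

lemma Bf_update (i k : Fin n) (hik : i < k) (x : Fin n → X) (y : Fin n → Bool) (a : X) (b : Bool) :
    Bf n P i (Function.update x k a) (Function.update y k b) = Bf n P i x y := by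
  unfold Bf
  refine Finset.sum_congr rfl fun x' _ => Finset.sum_congr rfl fun y' _ => ?_
  have hx : ∀ j : Fin n, j ≤ i → Function.update x k a j = x j := fun j hj =>
    Function.update_of_ne (ne_of_lt (lt_of_le_of_lt hj hik)) _ _
  have hy : ∀ j : Fin n, j < i → Function.update y k b j = y j := fun j hj =>
    Function.update_of_ne (ne_of_lt (lt_trans hj hik)) _ _
  refine if_congr (and_congr ?_ ?_) rfl rfl
  · exact forall_congr' fun j => imp_congr_right fun hj => by rw [hx j hj]
  · exact forall_congr' fun j => imp_congr_right fun hj => by rw [hy j hj]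

lemma Bf_update_y (k : Fin n) (x : Fin n → X) (y : Fin n → Bool) (b : Bool) :
    Bf n P k x (Function.update y k b) = Bf n P k x y := by
  unfold Bf
  refine Finset.sum_congr rfl fun x' _ => Finset.sum_congr rfl fun y' _ => ?_
  have hy : ∀ j : Fin n, j < k → Function.update y k b j = y j := fun j hj =>
    Function.update_of_ne (ne_of_lt hj) _ _
  refine if_congr (and_congr Iff.rfl ?_) rfl rfl
  exact forall_congr' fun j => imp_congr_right fun hj => by rw [hy j hj]

lemma sum_Bf_zero (hPsum : ∑ x, ∑ y, P x y = 1) (h0 : 0 < n)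
    (x : Fin n → X) (y : Fin n → Bool) :
    ∑ a : X, Bf n P ⟨0, h0⟩ (Function.update x ⟨0, h0⟩ a) y = 1 := by
  unfold Bf
  rw [Finset.sum_comm]
  rw [show ∑ x' : Fin n → X, ∑ a : X, ∑ y' : Fin n → Bool,
      (if (∀ j, j ≤ (⟨0, h0⟩ : Fin n) → x' j = Function.update x ⟨0, h0⟩ a j) ∧
          (∀ j, j < (⟨0, h0⟩ : Fin n) → y' j = y j) then P x' y' else 0)
      = ∑ x' : Fin n → X, ∑ y' : Fin n → Bool, P x' y' from ?_]
  · exact hPsum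
  refine Finset.sum_congr rfl fun x' _ => ?_
  rw [Finset.sum_comm]
  rw [show ∑ y' : Fin n → Bool, ∑ a : X,
      (if (∀ j, j ≤ (⟨0, h0⟩ : Fin n) → x' j = Function.update x ⟨0, h0⟩ a j) ∧
          (∀ j, j < (⟨0, h0⟩ : Fin n) → y' j = y j) then P x' y' else 0)
      = ∑ y' : Fin n → Bool, P x' y' from ?_]
  refine Finset.sum_congr rfl fun y' _ => ?_
  have hiff : ∀ a : X, ((∀ j, j ≤ (⟨0, h0⟩ : Fin n) → x' j = Function.update x ⟨0, h0⟩ a j) ∧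
      (∀ j, j < (⟨0, h0⟩ : Fin n) → y' j = y j)) ↔ (a = x' ⟨0, h0⟩) := by
    intro a
    constructor
    · rintro ⟨h1, -⟩
      have := h1 ⟨0, h0⟩ le_rfl
      rw [Function.update_self] at this
      exact this.symm
    · intro ha
      refine ⟨fun j hj => ?_, fun j hj => absurd (hj : j.val < (0:ℕ)) (Nat.not_lt_zero _)⟩
      have hj0 : j = ⟨0, h0⟩ := Fin.ext (show j.val = 0 by have h : j.val ≤ 0 := hj; omega)
      subst hj0
      rw [Function.update_self, ha]
  calc ∑ a : X, (if (∀ j, j ≤ (⟨0, h0⟩ : Fin n) → x' j = Function.update x ⟨0, h0⟩ a j) ∧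
          (∀ j, j < (⟨0, h0⟩ : Fin n) → y' j = y j) then P x' y' else 0)
      = ∑ a : X, (if a = x' ⟨0, h0⟩ then P x' y' else 0) :=
        Finset.sum_congr rfl fun a _ => if_congr (hiff a) rfl rfl
    _ = P x' y' := by rw [Finset.sum_ite_eq']; simp

lemma sum_Bf_succ (m : ℕ) (hm : m + 1 < n) (x : Fin n → X) (y : Fin n → Bool) :
    ∑ a : X, Bf n P ⟨m + 1, hm⟩ (Function.update x ⟨m + 1, hm⟩ a) y
      = Af n P ⟨m, by omega⟩ x y := by
  unfold Bf Af
  rw [Finset.sum_comm]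
  refine Finset.sum_congr rfl fun x' _ => ?_
  rw [Finset.sum_comm]
  refine Finset.sum_congr rfl fun y' _ => ?_
  have hiff : ∀ a : X, ((∀ j, j ≤ (⟨m + 1, hm⟩ : Fin n) → x' j = Function.update x ⟨m + 1, hm⟩ a j) ∧
      (∀ j, j < (⟨m + 1, hm⟩ : Fin n) → y' j = y j))
      ↔ (a = x' ⟨m + 1, hm⟩ ∧ ((∀ j, j ≤ (⟨m, by omega⟩ : Fin n) → x' j = x j) ∧
          (∀ j, j ≤ (⟨m, by omega⟩ : Fin n) → y' j = y j))) := by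
    intro a
    constructor
    · rintro ⟨h1, h2⟩
      refine ⟨?_, fun j hj => ?_, fun j hj => ?_⟩
      · have := h1 ⟨m + 1, hm⟩ le_rfl
        rw [Function.update_self] at this
        exact this.symm
      · have hjlt : j < (⟨m + 1, hm⟩ : Fin n) := by
          show j.val < m + 1; have h : j.val ≤ m := hj; omega
        have := h1 j (le_of_lt hjlt)
        rwa [Function.update_of_ne (ne_of_lt hjlt)] at this
      · exact h2 j (by show j.val < m + 1; have h : j.val ≤ m := hj; omega)
    · rintro ⟨ha, h1, h2⟩
      constructor
      · intro j hj
        by_cases hjk : j = ⟨m + 1, hm⟩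
        · subst hjk; rw [Function.update_self, ha]
        · have hjm : j ≤ (⟨m, by omega⟩ : Fin n) := by
            show j.val ≤ m
            have h1' : j.val ≤ m + 1 := hj
            have h2' : j.val ≠ m + 1 := fun h => hjk (Fin.ext h)
            omega
          rw [Function.update_of_ne hjk]
          exact h1 j hjm
      · intro j hj
        exact h2 j (by show j.val ≤ m; have h : j.val < m + 1 := hj; omega)
  calc ∑ a : X, (if (∀ j, j ≤ (⟨m + 1, hm⟩ : Fin n) → x' j = Function.update x ⟨m + 1, hm⟩ a j) ∧
          (∀ j, j < (⟨m + 1, hm⟩ : Fin n) → y' j = y j) then P x' y' else 0)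
      = ∑ a : X, (if a = x' ⟨m + 1, hm⟩ ∧ ((∀ j, j ≤ (⟨m, by omega⟩ : Fin n) → x' j = x j) ∧
          (∀ j, j ≤ (⟨m, by omega⟩ : Fin n) → y' j = y j)) then P x' y' else 0) :=
        Finset.sum_congr rfl fun a _ => if_congr (hiff a) rfl rfl
    _ = _ := by
        simp_rw [ite_and]
        rw [Finset.sum_ite_eq']
        simp


lemma sum_update_aux {n : ℕ} {Z : Type*} [Fintype Z] [DecidableEq Z] (k : Fin n)
    (h : (Fin n → Z) → ℝ) :
    ∑ x : Fin n → Z, ∑ a : Z, h (Function.update x k a)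
      = (Fintype.card Z : ℝ) * ∑ x, h x := by
  classical
  set e := Equiv.funSplitAt k Z with he
  have key : ∀ (p : Z × ({j : Fin n // j ≠ k} → Z)) (a : Z),
      Function.update (e.symm p) k a = e.symm (a, p.2) := by
    intro p a
    funext j
    by_cases hj : j = k
    · subst hj; simp [he, Equiv.funSplitAt, Function.update]
    · simp [he, Equiv.funSplitAt, Function.update, hj]
  calc ∑ x : Fin n → Z, ∑ a : Z, h (Function.update x k a)
      = ∑ p : Z × ({j : Fin n // j ≠ k} → Z), ∑ a, h (Function.update (e.symm p) k a) :=
        (Equiv.sum_comp e.symm _).symm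
    _ = ∑ p : Z × ({j : Fin n // j ≠ k} → Z), ∑ a, h (e.symm (a, p.2)) := by
        refine Finset.sum_congr rfl fun p _ => Finset.sum_congr rfl fun a _ => by rw [key]
    _ = ∑ v : Z, ∑ r : ({j : Fin n // j ≠ k} → Z), ∑ a, h (e.symm (a, r)) := by
        rw [Fintype.sum_prod_type]
    _ = (Fintype.card Z : ℝ) * ∑ r : ({j : Fin n // j ≠ k} → Z), ∑ a, h (e.symm (a, r)) := by
        rw [Finset.sum_const, Finset.card_univ, nsmul_eq_mul]
    _ = (Fintype.card Z : ℝ) * ∑ a, ∑ r : ({j : Fin n // j ≠ k} → Z), h (e.symm (a, r)) := by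
        rw [Finset.sum_comm]
    _ = (Fintype.card Z : ℝ) * ∑ p : Z × ({j : Fin n // j ≠ k} → Z), h (e.symm p) := by
        rw [Fintype.sum_prod_type]
    _ = _ := by rw [Equiv.sum_comp e.symm]


noncomputable def ccF (n : ℕ) (R Rbar : ℝ)
    (f : Fin n → (Fin n → X) → (Fin n → Bool) → ℝ) (i : Fin n)
    (x : Fin n → X) (y : Fin n → Bool) : ℝ :=
  (1 + f i x y * val R Rbar (y i)) * Qb R Rbar (y i)

noncomputable def WF (n : ℕ) (R Rbar : ℝ)
    (f : Fin n → (Fin n → X) → (Fin n → Bool) → ℝ)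
    (P : (Fin n → X) → (Fin n → Bool) → ℝ) (k : Fin n)
    (x : Fin n → X) (y : Fin n → Bool) : ℝ :=
  ccF n R Rbar f k x y * Bf n P k x y *
    ∏ i ∈ Finset.Iio k, (ccF n R Rbar f i x y * Bf n P i x y / Af n P i x y)

variable {R Rbar : ℝ} {f : Fin n → (Fin n → X) → (Fin n → Bool) → ℝ}

lemma ccF_update
    (hcausal : ∀ (i : Fin n) (x x' : Fin n → X) (y y' : Fin n → Bool),
      (∀ j, j ≤ i → x j = x' j) → (∀ j, j < i → y j = y' j) → f i x y = f i x' y')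
    (i k : Fin n) (hik : i < k) (x : Fin n → X) (y : Fin n → Bool) (a : X) (b : Bool) :
    ccF n R Rbar f i (Function.update x k a) (Function.update y k b) = ccF n R Rbar f i x y := by
  unfold ccF
  have hyi : Function.update y k b i = y i := Function.update_of_ne (ne_of_lt hik) _ _
  have hfi : f i (Function.update x k a) (Function.update y k b) = f i x y :=
    hcausal i _ x _ y
      (fun j hj => Function.update_of_ne (ne_of_lt (lt_of_le_of_lt hj hik)) _ _)
      (fun j hj => Function.update_of_ne (ne_of_lt (lt_trans hj hik)) _ _)
  rw [hyi, hfi]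

lemma sum_ccF (hR : 0 < R) (hRbar : 0 < Rbar)
    (hcausal : ∀ (i : Fin n) (x x' : Fin n → X) (y y' : Fin n → Bool),
      (∀ j, j ≤ i → x j = x' j) → (∀ j, j < i → y j = y' j) → f i x y = f i x' y')
    (k : Fin n) (x : Fin n → X) (y : Fin n → Bool) :
    ∑ b : Bool, ccF n R Rbar f k x (Function.update y k b) = 1 := by
  have hfb : ∀ b, f k x (Function.update y k b) = f k x y := fun b =>
    hcausal k x x _ y (fun j _ => rfl)
      (fun j hj => Function.update_of_ne (ne_of_lt hj) _ _)
  have hs : R + Rbar ≠ 0 := by positivity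
  rw [Fintype.sum_bool]
  unfold ccF
  rw [hfb, hfb, Function.update_self, Function.update_self]
  unfold val Qb
  simp only [if_true, if_false, Bool.cond_true, Bool.false_eq_true]
  field_simp
  ring

lemma double_update (k : Fin n) (g : (Fin n → X) → (Fin n → Bool) → ℝ) :
    ∑ x : Fin n → X, ∑ y : Fin n → Bool, ∑ a : X, ∑ b : Bool,
        g (Function.update x k a) (Function.update y k b)
      = ((Fintype.card X : ℝ) * 2) * ∑ x, ∑ y, g x y := by
  have h1 : ∀ x : Fin n → X, ∑ y : Fin n → Bool, ∑ b : Bool, g x (Function.update y k b)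
      = 2 * ∑ y, g x y := fun x => by
    have := sum_update_aux (Z := Bool) k (fun y => g x y)
    simpa using this
  calc ∑ x : Fin n → X, ∑ y : Fin n → Bool, ∑ a : X, ∑ b : Bool,
        g (Function.update x k a) (Function.update y k b)
      = ∑ x : Fin n → X, ∑ a : X, ∑ y : Fin n → Bool, ∑ b : Bool,
        g (Function.update x k a) (Function.update y k b) :=
        Finset.sum_congr rfl fun x _ => Finset.sum_comm
    _ = (Fintype.card X : ℝ) * ∑ x : Fin n → X, ∑ y : Fin n → Bool, ∑ b : Bool,
        g x (Function.update y k b) :=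
        sum_update_aux k (fun x => ∑ y : Fin n → Bool, ∑ b : Bool, g x (Function.update y k b))
    _ = (Fintype.card X : ℝ) * ∑ x : Fin n → X, 2 * ∑ y, g x y := by
        rw [Finset.sum_congr rfl fun x _ => h1 x]
    _ = ((Fintype.card X : ℝ) * 2) * ∑ x, ∑ y, g x y := by
        rw [← Finset.mul_sum]; ring

lemma pointwise_update (hR : 0 < R) (hRbar : 0 < Rbar)
    (hcausal : ∀ (i : Fin n) (x x' : Fin n → X) (y y' : Fin n → Bool),
      (∀ j, j ≤ i → x j = x' j) → (∀ j, j < i → y j = y' j) → f i x y = f i x' y')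
    (k : Fin n) (x : Fin n → X) (y : Fin n → Bool) :
    ∑ a : X, ∑ b : Bool, WF n R Rbar f P k (Function.update x k a) (Function.update y k b)
      = (∑ a : X, Bf n P k (Function.update x k a) y) *
          ∏ i ∈ Finset.Iio k, (ccF n R Rbar f i x y * Bf n P i x y / Af n P i x y) := by
  have hW : ∀ (a : X) (b : Bool),
      WF n R Rbar f P k (Function.update x k a) (Function.update y k b)
        = (ccF n R Rbar f k (Function.update x k a) (Function.update y k b) *
            Bf n P k (Function.update x k a) y) *
          ∏ i ∈ Finset.Iio k, (ccF n R Rbar f i x y * Bf n P i x y / Af n P i x y) := by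
    intro a b
    unfold WF
    rw [Bf_update_y]
    congr 1
    refine Finset.prod_congr rfl fun i hi => ?_
    have hik : i < k := Finset.mem_Iio.mp hi
    rw [ccF_update hcausal i k hik, Af_update i k hik, Bf_update i k hik]
  calc ∑ a : X, ∑ b : Bool, WF n R Rbar f P k (Function.update x k a) (Function.update y k b)
      = ∑ a : X, ((∑ b : Bool, ccF n R Rbar f k (Function.update x k a) (Function.update y k b)) *
          Bf n P k (Function.update x k a) y) *
          ∏ i ∈ Finset.Iio k, (ccF n R Rbar f i x y * Bf n P i x y / Af n P i x y) := by
        refine Finset.sum_congr rfl fun a _ => ?_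
        rw [Finset.sum_congr rfl fun b _ => hW a b]
        rw [← Finset.sum_mul, ← Finset.sum_mul]
    _ = ∑ a : X, Bf n P k (Function.update x k a) y *
          ∏ i ∈ Finset.Iio k, (ccF n R Rbar f i x y * Bf n P i x y / Af n P i x y) := by
        refine Finset.sum_congr rfl fun a _ => ?_
        rw [sum_ccF hR hRbar hcausal, one_mul]
    _ = _ := by rw [← Finset.sum_mul]


lemma Iio_zero (h0 : 0 < n) : Finset.Iio (⟨0, h0⟩ : Fin n) = ∅ := by
  ext j
  simp only [Finset.mem_Iio, Finset.notMem_empty, iff_false]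
  exact fun hj => Nat.not_lt_zero j.val hj

lemma Iio_succ (m : ℕ) (hm : m + 1 < n) :
    Finset.Iio (⟨m + 1, hm⟩ : Fin n)
      = insert (⟨m, by omega⟩ : Fin n) (Finset.Iio (⟨m, by omega⟩ : Fin n)) := by
  ext j
  simp only [Finset.mem_Iio, Finset.mem_insert]
  constructor
  · intro hj
    have hj' : j.val < m + 1 := hj
    rcases Nat.lt_or_ge j.val m with h | h
    · exact Or.inr h
    · exact Or.inl (Fin.ext (show j.val = m by omega))
  · rintro (h | h)
    · subst h; show m < m + 1; omega
    · have hj' : j.val < m := h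
      show j.val < m + 1
      omega

lemma main_induction [Nonempty X] (hR : 0 < R) (hRbar : 0 < Rbar)
    (hP : ∀ x y, 0 < P x y) (hPsum : ∑ x, ∑ y, P x y = 1)
    (hcausal : ∀ (i : Fin n) (x x' : Fin n → X) (y y' : Fin n → Bool),
      (∀ j, j ≤ i → x j = x' j) → (∀ j, j < i → y j = y' j) → f i x y = f i x' y') :
    ∀ m (hm : m < n), ∑ x, ∑ y, WF n R Rbar f P ⟨m, hm⟩ x y
      = ((Fintype.card X : ℝ) * 2) ^ (n - 1 - m) := by
  have hcard : (0:ℝ) < (Fintype.card X : ℝ) * 2 := by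
    have := Fintype.card_pos (α := X)
    positivity
  intro m
  induction m with
  | zero =>
    intro hm
    have h1 : ((Fintype.card X : ℝ) * 2) * ∑ x, ∑ y, WF n R Rbar f P ⟨0, hm⟩ x y
        = ((Fintype.card X : ℝ) * 2) ^ n := by
      rw [← double_update ⟨0, hm⟩ (WF n R Rbar f P ⟨0, hm⟩)]
      rw [Finset.sum_congr rfl fun x _ => Finset.sum_congr rfl fun y _ =>
        pointwise_update hR hRbar hcausal ⟨0, hm⟩ x y]
      have hone : ∀ (x : Fin n → X) (y : Fin n → Bool),
          (∑ a : X, Bf n P ⟨0, hm⟩ (Function.update x ⟨0, hm⟩ a) y) *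
            ∏ i ∈ Finset.Iio (⟨0, hm⟩ : Fin n),
              (ccF n R Rbar f i x y * Bf n P i x y / Af n P i x y) = 1 := by
        intro x y
        rw [sum_Bf_zero hPsum hm x y, Iio_zero hm, Finset.prod_empty, mul_one]
      rw [Finset.sum_congr rfl fun x _ => Finset.sum_congr rfl fun y _ => hone x y]
      simp only [Finset.sum_const, Finset.card_univ, nsmul_eq_mul, mul_one]
      rw [Fintype.card_fun, Fintype.card_fun, Fintype.card_fin, Fintype.card_bool]
      push_cast
      rw [mul_pow]
    have h2 : ((Fintype.card X : ℝ) * 2) ^ n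
        = ((Fintype.card X : ℝ) * 2) * ((Fintype.card X : ℝ) * 2) ^ (n - 1 - 0) := by
      rw [← pow_succ']
      congr 1
      omega
    exact mul_left_cancel₀ (ne_of_gt hcard) (h1.trans h2)
  | succ m ih =>
    intro hm
    have hmn : m < n := by omega
    have h1 : ((Fintype.card X : ℝ) * 2) * ∑ x, ∑ y, WF n R Rbar f P ⟨m + 1, hm⟩ x y
        = ∑ x, ∑ y, WF n R Rbar f P ⟨m, hmn⟩ x y := by
      rw [← double_update ⟨m + 1, hm⟩ (WF n R Rbar f P ⟨m + 1, hm⟩)]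
      rw [Finset.sum_congr rfl fun x _ => Finset.sum_congr rfl fun y _ =>
        pointwise_update hR hRbar hcausal ⟨m + 1, hm⟩ x y]
      refine Finset.sum_congr rfl fun x _ => Finset.sum_congr rfl fun y _ => ?_
      rw [sum_Bf_succ m hm x y]
      rw [Iio_succ m hm, Finset.prod_insert (by simp)]
      unfold WF
      have hA := (Af_pos hP (⟨m, by omega⟩ : Fin n) x y).ne'
      rw [← mul_assoc, mul_div_assoc', mul_div_cancel_left₀ _ hA]
    rw [ih hmn] at h1
    have h2 : ((Fintype.card X : ℝ) * 2) ^ (n - 1 - m)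
        = ((Fintype.card X : ℝ) * 2) * ((Fintype.card X : ℝ) * 2) ^ (n - 1 - (m + 1)) := by
      rw [← pow_succ']
      congr 1
      omega
    rw [h2] at h1
    exact mul_left_cancel₀ (ne_of_gt hcard) h1

end Stmt15Aux

open Stmt15Aux

/-- Jarzynski-type equality for binary gambling with memory effects and side
information: `⟨exp[n·g_n + s_{y^n} - i_{x^n→y^n} - s^Q_{y^n}]⟩ = 1`, where
`i_{x^n→y^n} = ln(P(y^n‖x^n)/P(y^n))` with `P(y^n‖x^n) = Π_i P(y_i | y^{i-1}, x^i)`,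
for betting fractions `f_i` depending only on `x^i` and `y^{i-1}`. -/
theorem stmt15 {X : Type*} [Fintype X] [DecidableEq X] (n : ℕ)
    (R Rbar : ℝ) (hR : 0 < R) (hRbar : 0 < Rbar)
    (P : (Fin n → X) → (Fin n → Bool) → ℝ)
    (hP : ∀ x y, 0 < P x y) (hPsum : ∑ x, ∑ y, P x y = 1)
    (f : Fin n → (Fin n → X) → (Fin n → Bool) → ℝ)
    (hcausal : ∀ (i : Fin n) (x x' : Fin n → X) (y y' : Fin n → Bool),
      (∀ j, j ≤ i → x j = x' j) → (∀ j, j < i → y j = y' j) → f i x y = f i x' y')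
    (hf : ∀ i x y, 0 < 1 + f i x y * val R Rbar (y i)) :
    ∑ x, ∑ y, P x y * Real.exp ((∑ i, Real.log (1 + f i x y * val R Rbar (y i)))
        - Real.log (∑ x', P x' y)
        - Real.log ((∏ i, condY n P i x y) / (∑ x', P x' y))
        + Real.log (∏ i, Qb R Rbar (y i))) = 1 := by
  classical
  rcases Nat.eq_zero_or_pos n with hn | hn
  · subst hn
    simp only [Fintype.sum_unique] at hPsum ⊢
    simp only [Finset.univ_eq_empty (α := Fin 0), Finset.sum_empty, Finset.prod_empty,
      Real.log_one, hPsum]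
    norm_num
  · have hXne : Nonempty X := by
      by_contra hX
      rw [not_nonempty_iff] at hX
      have hE : IsEmpty (Fin n → X) := ⟨fun x => (hX.false (x ⟨0, hn⟩))⟩
      rw [Finset.univ_eq_empty, Finset.sum_empty] at hPsum
      exact one_ne_zero hPsum.symm
    have hn1 : n - 1 < n := by omega
    have hAlast : ∀ (x : Fin n → X) (y : Fin n → Bool),
        Af n P ⟨n - 1, hn1⟩ x y = P x y := by
      intro x y
      unfold Af
      have hcond : ∀ (x' : Fin n → X) (y' : Fin n → Bool),
          ((∀ j, j ≤ (⟨n - 1, hn1⟩ : Fin n) → x' j = x j) ∧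
            (∀ j, j ≤ (⟨n - 1, hn1⟩ : Fin n) → y' j = y j)) ↔ (x' = x ∧ y' = y) := by
        intro x' y'
        constructor
        · rintro ⟨h1, h2⟩
          exact ⟨funext fun j => h1 j (show j.val ≤ n - 1 by have := j.isLt; omega),
            funext fun j => h2 j (show j.val ≤ n - 1 by have := j.isLt; omega)⟩
        · rintro ⟨rfl, rfl⟩
          exact ⟨fun _ _ => rfl, fun _ _ => rfl⟩
      have hinner : ∀ x' : Fin n → X,
          (∑ y' : Fin n → Bool, if (∀ j, j ≤ (⟨n - 1, hn1⟩ : Fin n) → x' j = x j) ∧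
            (∀ j, j ≤ (⟨n - 1, hn1⟩ : Fin n) → y' j = y j) then P x' y' else 0)
          = if x' = x then P x' y else 0 := by
        intro x'
        rw [Finset.sum_congr rfl fun y' _ => if_congr (hcond x' y') rfl rfl]
        by_cases hx' : x' = x
        · subst hx'
          simp only [true_and]
          rw [Finset.sum_ite_eq']
          simp
        · simp [hx']
      rw [Finset.sum_congr rfl fun x' _ => hinner x']
      rw [Finset.sum_ite_eq']
      simp
    have huniv : (Finset.univ : Finset (Fin n))
        = insert (⟨n - 1, hn1⟩ : Fin n) (Finset.Iio (⟨n - 1, hn1⟩ : Fin n)) := by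
      ext j
      simp only [Finset.mem_univ, Finset.mem_insert, Finset.mem_Iio, true_iff]
      rcases Nat.lt_or_ge j.val (n - 1) with h | h
      · exact Or.inr (show j.val < n - 1 from h)
      · exact Or.inl (Fin.ext (show j.val = n - 1 by have := j.isLt; omega))
    have hsummand : ∀ (x : Fin n → X) (y : Fin n → Bool),
        P x y * Real.exp ((∑ i, Real.log (1 + f i x y * val R Rbar (y i)))
          - Real.log (∑ x', P x' y)
          - Real.log ((∏ i, condY n P i x y) / (∑ x', P x' y))
          + Real.log (∏ i, Qb R Rbar (y i)))
        = WF n R Rbar f P ⟨n - 1, hn1⟩ x y := by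
      intro x y
      have hPy : 0 < ∑ x', P x' y :=
        Finset.sum_pos (fun x' _ => hP x' y) Finset.univ_nonempty
      have hcondpos : ∀ i : Fin n, 0 < condY n P i x y := fun i => by
        rw [condY_eq]
        exact div_pos (Af_pos hP i x y) (Bf_pos hP i x y)
      have hC : 0 < ∏ i, condY n P i x y :=
        Finset.prod_pos fun i _ => hcondpos i
      have hQpos : ∀ b, 0 < Qb R Rbar b := by
        intro b
        unfold Qb
        cases b <;> simp <;> positivity
      have hQ : 0 < ∏ i, Qb R Rbar (y i) := Finset.prod_pos fun i _ => hQpos (y i)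
      have e1 : Real.exp (∑ i, Real.log (1 + f i x y * val R Rbar (y i)))
          = ∏ i, (1 + f i x y * val R Rbar (y i)) := by
        rw [Real.exp_sum]
        exact Finset.prod_congr rfl fun i _ => Real.exp_log (hf i x y)
      rw [show (∑ i, Real.log (1 + f i x y * val R Rbar (y i)))
          - Real.log (∑ x', P x' y)
          - Real.log ((∏ i, condY n P i x y) / (∑ x', P x' y))
          + Real.log (∏ i, Qb R Rbar (y i))
          = ((∑ i, Real.log (1 + f i x y * val R Rbar (y i)))
              + Real.log (∏ i, Qb R Rbar (y i)))
            - (Real.log (∑ x', P x' y)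
              + Real.log ((∏ i, condY n P i x y) / (∑ x', P x' y))) by ring]
      rw [Real.exp_sub, Real.exp_add, Real.exp_add, e1, Real.exp_log hQ,
        Real.exp_log hPy, Real.exp_log (div_pos hC hPy)]
      rw [mul_comm (∑ x', P x' y) ((∏ i, condY n P i x y) / (∑ x', P x' y)),
        div_mul_cancel₀ _ (ne_of_gt hPy)]
      -- now: P x y * ((∏(1+f)) * ∏Qb / ∏condY) = WF ...
      have hprod : (∏ i, (1 + f i x y * val R Rbar (y i))) * (∏ i, Qb R Rbar (y i))
            / (∏ i, condY n P i x y)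
          = ∏ i, (ccF n R Rbar f i x y * Bf n P i x y / Af n P i x y) := by
        rw [← Finset.prod_mul_distrib, ← Finset.prod_div_distrib]
        refine Finset.prod_congr rfl fun i _ => ?_
        rw [condY_eq]
        unfold ccF
        rw [div_div_eq_mul_div]
      rw [hprod]
      unfold WF
      rw [← hAlast x y] at *
      rw [huniv, Finset.prod_insert (by simp)]
      rw [← mul_assoc, mul_div_assoc', mul_div_cancel_left₀ _ (ne_of_gt (Af_pos hP _ x y))]
    rw [Finset.sum_congr rfl fun x _ => Finset.sum_congr rfl fun y _ => hsummand x y]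
    have hmain := main_induction (X := X) (P := P) (R := R) (Rbar := Rbar) (f := f)
      hR hRbar hP hPsum hcausal (n - 1) hn1
    rw [hmain]
    simp
end

section
/- Let R, R̄ > 0, let X be a finite set, and let P(x^n, y^n) be a joint probability distribution on X^n × {R, −R̄}^n with all values strictly positive, and let f_i(x^i, y^{i−1}) be betting fractions with 1 + f_i·y_i > 0 everywhere. Then ⟨(1/n) Σ_{i=1}^n ln(1 + f_i(x^i, y^{i−1})·y_i)⟩ ≤ (1/n)·D_KL(P(y^n)‖Q(y^n)) + (1/n)·I_dr(X^n → Y^n), where I_dr(X^n → Y^n) = ⟨ln(P(y^n‖x^n)/P(y^n))⟩ is the directed information and P(y^n‖x^n) = ∏_i P(y_i | y^{i−1}, x^i). -/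
section Aux

variable {X : Type*} [Fintype X] [DecidableEq X] {n : ℕ}
  (P : (Fin n → X) → (Fin n → Bool) → ℝ)

noncomputable def Nnum (i : Fin n) (x : Fin n → X) (y : Fin n → Bool) : ℝ :=
  ∑ x' : Fin n → X, ∑ y' : Fin n → Bool,
      if (∀ j, j ≤ i → x' j = x j) ∧ (∀ j, j ≤ i → y' j = y j) then P x' y' else 0

noncomputable def Dden (i : Fin n) (x : Fin n → X) (y : Fin n → Bool) : ℝ :=
  ∑ x' : Fin n → X, ∑ y' : Fin n → Bool,
      if (∀ j, j ≤ i → x' j = x j) ∧ (∀ j, j < i → y' j = y j) then P x' y' else 0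

lemma Nnum_pos (hP : ∀ x y, 0 < P x y) (i : Fin n) (x : Fin n → X) (y : Fin n → Bool) :
    0 < Nnum P i x y := by
  unfold Nnum
  refine Finset.sum_pos' (fun x' _ => Finset.sum_nonneg fun y' _ => ?_)
    ⟨x, Finset.mem_univ x, ?_⟩
  · split
    · exact (hP _ _).le
    · exact le_rfl
  · refine Finset.sum_pos' (fun y' _ => ?_) ⟨y, Finset.mem_univ y, ?_⟩
    · split
      · exact (hP _ _).le
      · exact le_rfl
    · rw [if_pos ⟨fun j _ => rfl, fun j _ => rfl⟩]
      exact hP x y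

lemma Dden_pos (hP : ∀ x y, 0 < P x y) (i : Fin n) (x : Fin n → X) (y : Fin n → Bool) :
    0 < Dden P i x y := by
  unfold Dden
  refine Finset.sum_pos' (fun x' _ => Finset.sum_nonneg fun y' _ => ?_)
    ⟨x, Finset.mem_univ x, ?_⟩
  · split
    · exact (hP _ _).le
    · exact le_rfl
  · refine Finset.sum_pos' (fun y' _ => ?_) ⟨y, Finset.mem_univ y, ?_⟩
    · split
      · exact (hP _ _).le
      · exact le_rfl
    · rw [if_pos ⟨fun j _ => rfl, fun j _ => rfl⟩]
      exact hP x y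

lemma Nnum_congr (i : Fin n) {x1 x2 : Fin n → X} {y1 y2 : Fin n → Bool}
    (hx : ∀ j, j ≤ i → x1 j = x2 j) (hy : ∀ j, j ≤ i → y1 j = y2 j) :
    Nnum P i x1 y1 = Nnum P i x2 y2 := by
  unfold Nnum
  refine Finset.sum_congr rfl fun x' _ => Finset.sum_congr rfl fun y' _ => ?_
  refine if_congr ?_ rfl rfl
  constructor
  · rintro ⟨h1, h2⟩
    exact ⟨fun j hj => (h1 j hj).trans (hx j hj), fun j hj => (h2 j hj).trans (hy j hj)⟩
  · rintro ⟨h1, h2⟩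
    exact ⟨fun j hj => (h1 j hj).trans (hx j hj).symm,
           fun j hj => (h2 j hj).trans (hy j hj).symm⟩

lemma sum4_comm {α β γ δ : Type*} [Fintype α] [Fintype β] [Fintype γ] [Fintype δ]
    (t : α → β → γ → δ → ℝ) :
    ∑ a, ∑ b, ∑ c, ∑ d, t a b c d = ∑ c, ∑ d, ∑ a, ∑ b, t a b c d := by
  calc ∑ a, ∑ b, ∑ c, ∑ d, t a b c d
      = ∑ a, ∑ c, ∑ b, ∑ d, t a b c d :=
        Finset.sum_congr rfl fun a _ => Finset.sum_comm
    _ = ∑ c, ∑ a, ∑ b, ∑ d, t a b c d := Finset.sum_comm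
    _ = ∑ c, ∑ a, ∑ d, ∑ b, t a b c d :=
        Finset.sum_congr rfl fun c _ => Finset.sum_congr rfl fun a _ => Finset.sum_comm
    _ = ∑ c, ∑ d, ∑ a, ∑ b, t a b c d :=
        Finset.sum_congr rfl fun c _ => Finset.sum_comm

lemma inner_one (R Rbar : ℝ) (hR : 0 < R) (hRbar : 0 < Rbar)
    (hP : ∀ x y, 0 < P x y)
    (f : Fin n → (Fin n → X) → (Fin n → Bool) → ℝ)
    (hcausal : ∀ (i : Fin n) (x x' : Fin n → X) (y y' : Fin n → Bool),
      (∀ j, j ≤ i → x j = x' j) → (∀ j, j < i → y j = y' j) → f i x y = f i x' y')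
    (i : Fin n) (x' : Fin n → X) (y' : Fin n → Bool) :
    ∑ x, ∑ y, (if (∀ j, j ≤ i → x' j = x j) ∧ (∀ j, j < i → y' j = y j)
        then P x y * ((1 + f i x y * val R Rbar (y i)) * Qb R Rbar (y i)) / Nnum P i x y
        else 0) = 1 := by
  set z : Bool → (Fin n → Bool) := fun b j => if j = i then b else y' j with hz
  have hzi : ∀ b, z b i = b := fun b => if_pos rfl
  have hzlt : ∀ (b : Bool) (j : Fin n), j < i → z b j = y' j :=
    fun b j hj => if_neg (Fin.ne_of_lt hj)
  -- splitting lemma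
  have hsplit : ∀ (g : (Fin n → X) → (Fin n → Bool) → ℝ) (x : Fin n → X) (y : Fin n → Bool),
      (if (∀ j, j ≤ i → x' j = x j) ∧ (∀ j, j < i → y' j = y j) then g x y else 0)
      = (if (∀ j, j ≤ i → x' j = x j) ∧ (∀ j, j ≤ i → z true j = y j) then g x y else 0)
        + (if (∀ j, j ≤ i → x' j = x j) ∧ (∀ j, j ≤ i → z false j = y j) then g x y else 0) := by
    intro g x y
    have hiff : ∀ b : Bool, y i = b →
        (((∀ j, j ≤ i → x' j = x j) ∧ (∀ j, j < i → y' j = y j)) ↔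
          ((∀ j, j ≤ i → x' j = x j) ∧ (∀ j, j ≤ i → z b j = y j))) := by
      intro b hb
      constructor
      · rintro ⟨h1, h2⟩
        refine ⟨h1, fun j hj => ?_⟩
        rcases lt_or_eq_of_le hj with h | h
        · rw [hzlt b j h]; exact h2 j h
        · rw [h, hzi, hb]
      · rintro ⟨h1, h2⟩
        exact ⟨h1, fun j hj => by rw [← hzlt b j hj]; exact h2 j hj.le⟩
    have hne : ∀ b : Bool, y i ≠ b →
        ¬((∀ j, j ≤ i → x' j = x j) ∧ (∀ j, j ≤ i → z b j = y j)) := by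
      rintro b hb ⟨_, h2⟩
      have := h2 i le_rfl
      rw [hzi] at this
      exact hb this.symm
    cases hyi : y i with
    | true =>
        rw [if_congr (hiff true hyi) rfl rfl,
          if_neg (hne false (by rw [hyi]; exact Bool.noConfusion)), add_zero]
    | false =>
        rw [if_congr (hiff false hyi) rfl rfl,
          if_neg (hne true (by rw [hyi]; exact Bool.noConfusion)), zero_add]
  have heval : ∀ b : Bool,
      (∑ x, ∑ y, (if (∀ j, j ≤ i → x' j = x j) ∧ (∀ j, j ≤ i → z b j = y j)
        then P x y * ((1 + f i x y * val R Rbar (y i)) * Qb R Rbar (y i)) / Nnum P i x y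
        else 0))
      = (1 + f i x' y' * val R Rbar b) * Qb R Rbar b := by
    intro b
    have hfz : f i x' (z b) = f i x' y' :=
      hcausal i x' x' (z b) y' (fun j _ => rfl) (fun j hj => hzlt b j hj)
    have hNz : 0 < Nnum P i x' (z b) := Nnum_pos P hP i x' (z b)
    have hconst : ∀ (x : Fin n → X) (y : Fin n → Bool),
        ((∀ j, j ≤ i → x' j = x j) ∧ (∀ j, j ≤ i → z b j = y j)) →
        P x y * ((1 + f i x y * val R Rbar (y i)) * Qb R Rbar (y i)) / Nnum P i x y
        = ((1 + f i x' y' * val R Rbar b) * Qb R Rbar b / Nnum P i x' (z b)) * P x y := by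
      rintro x y ⟨h1, h2⟩
      have hfy : f i x y = f i x' y' := by
        calc f i x y = f i x' (z b) :=
              hcausal i x x' y (z b) (fun j hj => (h1 j hj).symm)
                (fun j hj => (h2 j hj.le).symm)
          _ = f i x' y' := hfz
      have hyi : y i = b := ((h2 i le_rfl).symm).trans (hzi b)
      have hN : Nnum P i x y = Nnum P i x' (z b) :=
        Nnum_congr P i (fun j hj => (h1 j hj).symm) (fun j hj => (h2 j hj).symm)
      rw [hfy, hyi, hN]; ring
    calc (∑ x, ∑ y, (if (∀ j, j ≤ i → x' j = x j) ∧ (∀ j, j ≤ i → z b j = y j)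
            then P x y * ((1 + f i x y * val R Rbar (y i)) * Qb R Rbar (y i)) / Nnum P i x y
            else 0))
        = ∑ x, ∑ y, (if (∀ j, j ≤ i → x' j = x j) ∧ (∀ j, j ≤ i → z b j = y j)
            then ((1 + f i x' y' * val R Rbar b) * Qb R Rbar b / Nnum P i x' (z b)) * P x y
            else 0) := by
          refine Finset.sum_congr rfl fun x _ => Finset.sum_congr rfl fun y _ => ?_
          split
          · next h => exact hconst x y h
          · rfl
      _ = ((1 + f i x' y' * val R Rbar b) * Qb R Rbar b / Nnum P i x' (z b)) *
            ∑ x, ∑ y, (if (∀ j, j ≤ i → x' j = x j) ∧ (∀ j, j ≤ i → z b j = y j)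
              then P x y else 0) := by
          rw [Finset.mul_sum]
          refine Finset.sum_congr rfl fun x _ => ?_
          rw [Finset.mul_sum]
          exact Finset.sum_congr rfl fun y _ => by simp only [mul_ite, mul_zero]
      _ = ((1 + f i x' y' * val R Rbar b) * Qb R Rbar b / Nnum P i x' (z b)) *
            Nnum P i x' (z b) := by
          congr 1
          unfold Nnum
          refine Finset.sum_congr rfl fun x _ => Finset.sum_congr rfl fun y _ => ?_
          refine if_congr ?_ rfl rfl
          constructor
          · rintro ⟨h1, h2⟩
            exact ⟨fun j hj => (h1 j hj).symm, fun j hj => (h2 j hj).symm⟩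
          · rintro ⟨h1, h2⟩
            exact ⟨fun j hj => (h1 j hj).symm, fun j hj => (h2 j hj).symm⟩
      _ = (1 + f i x' y' * val R Rbar b) * Qb R Rbar b := div_mul_cancel₀ _ hNz.ne'
  calc (∑ x, ∑ y, (if (∀ j, j ≤ i → x' j = x j) ∧ (∀ j, j < i → y' j = y j)
        then P x y * ((1 + f i x y * val R Rbar (y i)) * Qb R Rbar (y i)) / Nnum P i x y
        else 0))
      = (∑ x, ∑ y, ((if (∀ j, j ≤ i → x' j = x j) ∧ (∀ j, j ≤ i → z true j = y j)
            then P x y * ((1 + f i x y * val R Rbar (y i)) * Qb R Rbar (y i)) / Nnum P i x y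
            else 0)
          + (if (∀ j, j ≤ i → x' j = x j) ∧ (∀ j, j ≤ i → z false j = y j)
            then P x y * ((1 + f i x y * val R Rbar (y i)) * Qb R Rbar (y i)) / Nnum P i x y
            else 0))) := by
        refine Finset.sum_congr rfl fun x _ => Finset.sum_congr rfl fun y _ => ?_
        exact hsplit (fun x y =>
          P x y * ((1 + f i x y * val R Rbar (y i)) * Qb R Rbar (y i)) / Nnum P i x y) x y
    _ = (1 + f i x' y' * val R Rbar true) * Qb R Rbar true
        + (1 + f i x' y' * val R Rbar false) * Qb R Rbar false := by
        rw [← heval true, ← heval false]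
        rw [← Finset.sum_add_distrib]
        exact Finset.sum_congr rfl fun x _ => Finset.sum_add_distrib
    _ = 1 := by
        have hRR : R + Rbar ≠ 0 := by positivity
        simp only [val, Qb, if_true, if_false, Bool.false_eq_true]
        field_simp
        ring

lemma key_sum_s16 (R Rbar : ℝ) (hR : 0 < R) (hRbar : 0 < Rbar)
    (hP : ∀ x y, 0 < P x y) (hPsum : ∑ x, ∑ y, P x y = 1)
    (f : Fin n → (Fin n → X) → (Fin n → Bool) → ℝ)
    (hcausal : ∀ (i : Fin n) (x x' : Fin n → X) (y y' : Fin n → Bool),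
      (∀ j, j ≤ i → x j = x' j) → (∀ j, j < i → y j = y' j) → f i x y = f i x' y')
    (i : Fin n) :
    ∑ x, ∑ y, P x y * ((1 + f i x y * val R Rbar (y i)) * Qb R Rbar (y i))
        / Nnum P i x y * Dden P i x y = 1 := by
  calc ∑ x, ∑ y, P x y * ((1 + f i x y * val R Rbar (y i)) * Qb R Rbar (y i))
          / Nnum P i x y * Dden P i x y
      = ∑ x, ∑ y, ∑ x', ∑ y',
          (if (∀ j, j ≤ i → x' j = x j) ∧ (∀ j, j < i → y' j = y j)
            then P x y * ((1 + f i x y * val R Rbar (y i)) * Qb R Rbar (y i)) / Nnum P i x y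
            else 0) * P x' y' := by
        refine Finset.sum_congr rfl fun x _ => Finset.sum_congr rfl fun y _ => ?_
        unfold Dden
        rw [Finset.mul_sum]
        refine Finset.sum_congr rfl fun x' _ => ?_
        rw [Finset.mul_sum]
        refine Finset.sum_congr rfl fun y' _ => ?_
        simp only [mul_ite, ite_mul, mul_zero, zero_mul]
    _ = ∑ x', ∑ y', ∑ x, ∑ y,
          (if (∀ j, j ≤ i → x' j = x j) ∧ (∀ j, j < i → y' j = y j)
            then P x y * ((1 + f i x y * val R Rbar (y i)) * Qb R Rbar (y i)) / Nnum P i x y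
            else 0) * P x' y' := sum4_comm _
    _ = ∑ x', ∑ y', (∑ x, ∑ y,
          (if (∀ j, j ≤ i → x' j = x j) ∧ (∀ j, j < i → y' j = y j)
            then P x y * ((1 + f i x y * val R Rbar (y i)) * Qb R Rbar (y i)) / Nnum P i x y
            else 0)) * P x' y' := by
        refine Finset.sum_congr rfl fun x' _ => Finset.sum_congr rfl fun y' _ => ?_
        rw [Finset.sum_mul]
        exact Finset.sum_congr rfl fun x _ => (Finset.sum_mul _ _ _).symm
    _ = ∑ x', ∑ y', P x' y' := by
        refine Finset.sum_congr rfl fun x' _ => Finset.sum_congr rfl fun y' _ => ?_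
        rw [inner_one P R Rbar hR hRbar hP f hcausal i x' y', one_mul]
    _ = 1 := hPsum

end Aux

lemma condY_eq {X : Type*} [Fintype X] [DecidableEq X] {n : ℕ}
    (P : (Fin n → X) → (Fin n → Bool) → ℝ) (i : Fin n) (x : Fin n → X) (y : Fin n → Bool) :
    condY n P i x y = Nnum P i x y / Dden P i x y := rfl

/-- In binary gambling with memory effects and side information, the average capital
growth rate is bounded by `(1/n)·D_KL(P(y^n)‖Q(y^n)) + (1/n)·I_dr(X^n → Y^n)`,
where `I_dr` is the directed information. -/
theorem stmt16 {X : Type*} [Fintype X] [DecidableEq X] (n : ℕ) (hn : 0 < n)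
    (R Rbar : ℝ) (hR : 0 < R) (hRbar : 0 < Rbar)
    (P : (Fin n → X) → (Fin n → Bool) → ℝ)
    (hP : ∀ x y, 0 < P x y) (hPsum : ∑ x, ∑ y, P x y = 1)
    (f : Fin n → (Fin n → X) → (Fin n → Bool) → ℝ)
    (hcausal : ∀ (i : Fin n) (x x' : Fin n → X) (y y' : Fin n → Bool),
      (∀ j, j ≤ i → x j = x' j) → (∀ j, j < i → y j = y' j) → f i x y = f i x' y')
    (hf : ∀ i x y, 0 < 1 + f i x y * val R Rbar (y i)) :
    ∑ x, ∑ y, P x y * ((1 / (n : ℝ)) * ∑ i, Real.log (1 + f i x y * val R Rbar (y i)))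
      ≤ (1 / (n : ℝ)) * (∑ y, (∑ x, P x y) *
            Real.log ((∑ x, P x y) / ∏ i, Qb R Rbar (y i)))
        + (1 / (n : ℝ)) * (∑ x, ∑ y, P x y *
            Real.log ((∏ i, condY n P i x y) / (∑ x', P x' y))) := by
  have hRR : (0:ℝ) < R + Rbar := by positivity
  have hQpos : ∀ b, 0 < Qb R Rbar b := by
    intro b; cases b <;> simp only [Qb, if_true, if_false, Bool.false_eq_true] <;> positivity
  have hNpos := Nnum_pos P hP
  have hDpos := Dden_pos P hP
  have hXne : Nonempty (Fin n → X) := by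
    by_contra h
    rw [not_nonempty_iff] at h
    simp at hPsum
  have hM : ∀ y : Fin n → Bool, 0 < ∑ x, P x y := fun y =>
    Finset.sum_pos (fun x _ => hP x y) Finset.univ_nonempty
  have hCond : ∀ (i : Fin n) x y, 0 < condY n P i x y := fun i x y => by
    rw [condY_eq]; exact div_pos (hNpos i x y) (hDpos i x y)
  have hCprod : ∀ x y, 0 < ∏ i, condY n P i x y := fun x y =>
    Finset.prod_pos fun i _ => hCond i x y
  have hQprod : ∀ y : Fin n → Bool, 0 < ∏ i, Qb R Rbar (y i) := fun y =>
    Finset.prod_pos fun i _ => hQpos (y i)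
  -- helpers for nested sums
  have sub2 : ∀ (A B : (Fin n → X) → (Fin n → Bool) → ℝ),
      ∑ x, ∑ y, (A x y - B x y) = (∑ x, ∑ y, A x y) - ∑ x, ∑ y, B x y := by
    intro A B
    rw [← Finset.sum_sub_distrib]
    exact Finset.sum_congr rfl fun x _ => Finset.sum_sub_distrib _ _
  have swap3 : ∀ g : Fin n → (Fin n → X) → (Fin n → Bool) → ℝ,
      ∑ x, ∑ y, ∑ i, g i x y = ∑ i, ∑ x, ∑ y, g i x y := by
    intro g
    calc ∑ x, ∑ y, ∑ i, g i x y = ∑ x, ∑ i, ∑ y, g i x y :=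
          Finset.sum_congr rfl fun x _ => Finset.sum_comm
      _ = ∑ i, ∑ x, ∑ y, g i x y := Finset.sum_comm
  -- per-index inequality
  have hper : ∀ i : Fin n,
      (∑ x, ∑ y, P x y * Real.log (1 + f i x y * val R Rbar (y i)))
      ≤ ∑ x, ∑ y, P x y * Real.log (condY n P i x y / Qb R Rbar (y i)) := by
    intro i
    have hstep : ∀ x y,
        P x y * Real.log (1 + f i x y * val R Rbar (y i))
          - P x y * Real.log (condY n P i x y / Qb R Rbar (y i))
        = P x y * Real.log ((1 + f i x y * val R Rbar (y i)) * Qb R Rbar (y i)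
            / Nnum P i x y * Dden P i x y) := by
      intro x y
      rw [← mul_sub]
      congr 1
      rw [condY_eq]
      have ha : (1 + f i x y * val R Rbar (y i)) ≠ 0 := (hf i x y).ne'
      have hq : Qb R Rbar (y i) ≠ 0 := (hQpos _).ne'
      have hN : Nnum P i x y ≠ 0 := (hNpos i x y).ne'
      have hD : Dden P i x y ≠ 0 := (hDpos i x y).ne'
      rw [Real.log_mul (div_ne_zero (mul_ne_zero ha hq) hN) hD,
          Real.log_div (mul_ne_zero ha hq) hN, Real.log_mul ha hq,
          Real.log_div (div_ne_zero hN hD) hq, Real.log_div hN hD]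
      ring
    have hsub : ∑ x, ∑ y, (P x y * Real.log (1 + f i x y * val R Rbar (y i))
        - P x y * Real.log (condY n P i x y / Qb R Rbar (y i))) ≤ 0 := by
      have htpos : ∀ x y, 0 < (1 + f i x y * val R Rbar (y i)) * Qb R Rbar (y i)
          / Nnum P i x y * Dden P i x y := fun x y =>
        mul_pos (div_pos (mul_pos (hf i x y) (hQpos _)) (hNpos i x y)) (hDpos i x y)
      calc ∑ x, ∑ y, (P x y * Real.log (1 + f i x y * val R Rbar (y i))
              - P x y * Real.log (condY n P i x y / Qb R Rbar (y i)))
          = ∑ x, ∑ y, P x y * Real.log ((1 + f i x y * val R Rbar (y i)) * Qb R Rbar (y i)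
              / Nnum P i x y * Dden P i x y) := by
            exact Finset.sum_congr rfl fun x _ => Finset.sum_congr rfl fun y _ => hstep x y
        _ ≤ ∑ x, ∑ y, P x y * ((1 + f i x y * val R Rbar (y i)) * Qb R Rbar (y i)
              / Nnum P i x y * Dden P i x y - 1) := by
            refine Finset.sum_le_sum fun x _ => Finset.sum_le_sum fun y _ => ?_
            exact mul_le_mul_of_nonneg_left
              (Real.log_le_sub_one_of_pos (htpos x y)) (hP x y).le
        _ = (∑ x, ∑ y, P x y * ((1 + f i x y * val R Rbar (y i)) * Qb R Rbar (y i))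
              / Nnum P i x y * Dden P i x y) - ∑ x, ∑ y, P x y := by
            rw [← sub2]
            exact Finset.sum_congr rfl fun x _ => Finset.sum_congr rfl fun y _ => by ring
        _ = 0 := by
            rw [key_sum_s16 P R Rbar hR hRbar hP hPsum f hcausal i, hPsum, sub_self]
    have := sub2 (fun x y => P x y * Real.log (1 + f i x y * val R Rbar (y i)))
      (fun x y => P x y * Real.log (condY n P i x y / Qb R Rbar (y i)))
    rw [this] at hsub
    linarith
  -- RHS rewrite
  have hterm : ∀ (x : Fin n → X) (y : Fin n → Bool),
      Real.log ((∑ x', P x' y) / ∏ i, Qb R Rbar (y i))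
        + Real.log ((∏ i, condY n P i x y) / (∑ x', P x' y))
      = ∑ i, Real.log (condY n P i x y / Qb R Rbar (y i)) := by
    intro x y
    rw [show (∑ i, Real.log (condY n P i x y / Qb R Rbar (y i)))
        = Real.log (∏ i, condY n P i x y / Qb R Rbar (y i)) from
        (Real.log_prod fun i _ => (div_pos (hCond i x y) (hQpos (y i))).ne').symm]
    rw [Finset.prod_div_distrib,
        Real.log_div (hM y).ne' (hQprod y).ne',
        Real.log_div (hCprod x y).ne' (hM y).ne',
        Real.log_div (hCprod x y).ne' (hQprod y).ne']
    ring
  have hB : (∑ y, (∑ x, P x y) * Real.log ((∑ x, P x y) / ∏ i, Qb R Rbar (y i)))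
      = ∑ x, ∑ y, P x y * Real.log ((∑ x', P x' y) / ∏ i, Qb R Rbar (y i)) := by
    rw [Finset.sum_comm]
    exact Finset.sum_congr rfl fun y _ => Finset.sum_mul _ _ _
  have hBC : (∑ y, (∑ x, P x y) * Real.log ((∑ x, P x y) / ∏ i, Qb R Rbar (y i)))
        + (∑ x, ∑ y, P x y * Real.log ((∏ i, condY n P i x y) / (∑ x', P x' y)))
      = ∑ x, ∑ y, P x y * ∑ i, Real.log (condY n P i x y / Qb R Rbar (y i)) := by
    rw [hB, ← Finset.sum_add_distrib]
    refine Finset.sum_congr rfl fun x _ => ?_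
    rw [← Finset.sum_add_distrib]
    refine Finset.sum_congr rfl fun y _ => ?_
    rw [← mul_add, hterm x y]
  -- LHS rewrite and conclusion
  have hL : (∑ x, ∑ y, P x y * ((1 / (n : ℝ)) *
        ∑ i, Real.log (1 + f i x y * val R Rbar (y i))))
      = (1 / (n : ℝ)) * ∑ x, ∑ y, P x y *
          ∑ i, Real.log (1 + f i x y * val R Rbar (y i)) := by
    rw [Finset.mul_sum]
    refine Finset.sum_congr rfl fun x _ => ?_
    rw [Finset.mul_sum]
    exact Finset.sum_congr rfl fun y _ => by ring
  rw [hL, ← mul_add, hBC]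
  refine mul_le_mul_of_nonneg_left ?_ (by positivity)
  have hmul1 : (∑ x, ∑ y, P x y * ∑ i, Real.log (1 + f i x y * val R Rbar (y i)))
      = ∑ i, ∑ x, ∑ y, P x y * Real.log (1 + f i x y * val R Rbar (y i)) := by
    simp_rw [Finset.mul_sum]
    exact swap3 _
  have hmul2 : (∑ x, ∑ y, P x y * ∑ i, Real.log (condY n P i x y / Qb R Rbar (y i)))
      = ∑ i, ∑ x, ∑ y, P x y * Real.log (condY n P i x y / Qb R Rbar (y i)) := by
    simp_rw [Finset.mul_sum]
    exact swap3 _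
  rw [hmul1, hmul2]
  exact Finset.sum_le_sum fun i _ => hper i
end
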